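/- arXiv:0707.0016 — 3 statements merged into one kernel-verified Lean document; each statement's English description precedes it below -/
import Mathlib

section
/- Let T : [0,∞)^P → [0,∞)^P be defined componentwise by T_γ(μ) = R_γ φ_γ(μ) where φ_γ(μ) = 1 + Σ_{n≥1} Σ_{(γ₁,...,γₙ)∈Pⁿ} bₙ(γ;γ₁,...,γₙ) μ_{γ₁}···μ_{γₙ} with nonnegative coefficients bₙ. Suppose μ : P → [0,∞) is a fixed point of T, i.e. μ_γ = R_γ φ_γ(μ) for all γ. If 0 ≤ ρ̃_γ ≤ R_γ for all γ, then the tree-sum Φ_{γ₀}(ρ̃) = Σ_{t ∈ planar rooted trees} ∏_{v ⪰ root} [ Σ_{(γ_{v¹},...,γ_{v^{s_v}})∈P^{s_v}} b_{s_v}(γ_v; γ_{v¹},...,γ_{v^{s_v}}) ρ̃_{γ_{v¹}}···ρ̃_{γ_{v^{s_v}}} ] converges and satisfies ρ̃_{γ₀} Φ_{γ₀}(ρ̃) ≤ μ_{γ₀} for every γ₀ ∈ P. -/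
open scoped BigOperators ENNReal NNReal
noncomputable section

/-- Planar rooted trees: a root together with an ordered (finite) list of subtrees. -/
inductive PTree where
  | node : List PTree → PTree

/-- The weight of a planar rooted tree pinned at polymer `γ`: at each vertex `v` with
`s_v` children a vertex function `b_{s_v}(γ_v; γ_{v¹},…,γ_{v^{s_v}})` acts, and the
polymers at the children are weighted by `ρ̃` and summed over `P`. -/
def treeW {P : Type*} (b : (n : ℕ) → P → (Fin n → P) → ℝ≥0∞) (ρ : P → ℝ≥0∞) :
    PTree → P → ℝ≥0∞
  | .node l, γ => ∑' g : Fin l.length → P,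
      b l.length γ g * ∏ i : Fin l.length, ρ (g i) * treeW b ρ (l.get i) (g i)
decreasing_by simp_wf; have := List.sizeOf_lt_of_mem (l.getElem_mem i.isLt); simp [PTree.node.sizeOf_spec]; omega

namespace Stmt2Aux

/-- Depth-`k` truncated tree weight. -/
def treeWk {P : Type*} (b : (n : ℕ) → P → (Fin n → P) → ℝ≥0∞) (ρ : P → ℝ≥0∞) :
    ℕ → PTree → P → ℝ≥0∞
  | 0, _, _ => 0
  | k + 1, .node l, γ => ∑' g : Fin l.length → P,
      b l.length γ g * ∏ i : Fin l.length, ρ (g i) * treeWk b ρ k (l.get i) (g i)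

/-- The `k`-th iterate sums. -/
def Sk {P : Type*} (b : (n : ℕ) → P → (Fin n → P) → ℝ≥0∞) (ρ : P → ℝ≥0∞) :
    ℕ → P → ℝ≥0∞
  | 0, _ => 0
  | k + 1, γ => ∑' n : ℕ, ∑' g : Fin n → P,
      b n γ g * ∏ i : Fin n, ρ (g i) * Sk b ρ k (g i)

variable {P : Type*} (b : (n : ℕ) → P → (Fin n → P) → ℝ≥0∞) (ρ : P → ℝ≥0∞)

lemma treeWk_succ_le (k : ℕ) : ∀ t γ, treeWk b ρ k t γ ≤ treeWk b ρ (k + 1) t γ := by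
  induction k with
  | zero => intro t γ; simp [treeWk]
  | succ k ih =>
    rintro ⟨l⟩ γ
    simp only [treeWk]
    refine ENNReal.tsum_le_tsum fun g => ?_
    gcongr with i
    exact ih _ _

lemma treeWk_mono (t : PTree) (γ : P) : Monotone fun k => treeWk b ρ k t γ :=
  monotone_nat_of_le_succ fun k => treeWk_succ_le b ρ k t γ

lemma treeWk_le_treeW (k : ℕ) : ∀ t γ, treeWk b ρ k t γ ≤ treeW b ρ t γ := by
  induction k with
  | zero => intro t γ; simp [treeWk]
  | succ k ih =>
    rintro ⟨l⟩ γ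
    rw [treeW]
    simp only [treeWk]
    refine ENNReal.tsum_le_tsum fun g => ?_
    gcongr with i
    exact ih _ _

lemma treeW_le_treeWk (k : ℕ) : ∀ t γ, sizeOf t ≤ k → treeW b ρ t γ ≤ treeWk b ρ k t γ := by
  induction k with
  | zero =>
    rintro ⟨l⟩ γ h
    simp [PTree.node.sizeOf_spec] at h
  | succ k ih =>
    rintro ⟨l⟩ γ h
    rw [treeW]
    simp only [treeWk]
    refine ENNReal.tsum_le_tsum fun g => ?_
    gcongr with i
    refine ih _ _ ?_
    have := List.sizeOf_lt_of_mem (l.getElem_mem i.isLt)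
    simp only [PTree.node.sizeOf_spec] at h
    simp only [List.get_eq_getElem]
    omega

lemma treeW_eq_iSup (t : PTree) (γ : P) : treeW b ρ t γ = ⨆ k, treeWk b ρ k t γ := by
  refine le_antisymm ?_ (iSup_le fun k => treeWk_le_treeW b ρ k t γ)
  exact le_iSup_of_le (sizeOf t) (treeW_le_treeWk b ρ (sizeOf t) t γ le_rfl)

/-- `∑'` over a finite product type of a product factorizes. -/
lemma tsum_pi_prod {α : Type*} : ∀ (n : ℕ) (h : Fin n → α → ℝ≥0∞),
    ∑' f : Fin n → α, ∏ i, h i (f i) = ∏ i, ∑' a, h i a := by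
  intro n
  induction n with
  | zero =>
    intro h
    simp only [Finset.univ_eq_empty, Finset.prod_empty]
    exact tsum_eq_single (fun i => i.elim0) fun b' hb' => (hb' (Subsingleton.elim b' _)).elim
  | succ n ih =>
    intro h
    have he := ((Fin.consEquiv (fun _ : Fin (n + 1) => α)).tsum_eq (fun f => ∏ i, h i (f i))).symm
    rw [he]
    have : ∀ p : α × (Fin n → α),
        (∏ i, h i ((Fin.consEquiv (fun _ : Fin (n + 1) => α)) p i)) =
          h 0 p.1 * ∏ i : Fin n, h i.succ (p.2 i) := by
      rintro ⟨a, g⟩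
      rw [Fin.prod_univ_succ]
      simp [Fin.consEquiv]
    rw [tsum_congr this, ENNReal.tsum_prod']
    simp_rw [ENNReal.tsum_mul_left, ENNReal.tsum_mul_right]
    rw [ih, Fin.prod_univ_succ]

/-- The equivalence between planar trees and sigma-tuples of subtrees. -/
def nodeEquiv : PTree ≃ List PTree where
  toFun t := match t with | .node l => l
  invFun := .node
  left_inv t := by cases t; rfl
  right_inv l := rfl

lemma tsum_treeWk_eq (k : ℕ) (γ : P) :
    ∑' t : PTree, treeWk b ρ k t γ = Sk b ρ k γ := by
  induction k generalizing γ with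
  | zero => simp [treeWk, Sk]
  | succ k ih =>
    set e : PTree ≃ Σ n, Fin n → PTree := nodeEquiv.trans List.equivSigmaTuple with he
    set B : (Σ n, Fin n → PTree) → ℝ≥0∞ := fun p =>
      ∑' g : Fin p.1 → P, b p.1 γ g * ∏ i : Fin p.1, ρ (g i) * treeWk b ρ k (p.2 i) (g i)
      with hB
    have h1 : ∀ t, treeWk b ρ (k + 1) t γ = B (e t) := by
      rintro ⟨l⟩; rfl
    calc ∑' t : PTree, treeWk b ρ (k + 1) t γ
        = ∑' t : PTree, B (e t) := tsum_congr h1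
      _ = ∑' p : Σ n, Fin n → PTree, B p := e.tsum_eq B
      _ = ∑' (n : ℕ) (f : Fin n → PTree), B ⟨n, f⟩ := ENNReal.tsum_sigma' B
      _ = Sk b ρ (k + 1) γ := by
          simp only [Sk]
          refine tsum_congr fun n => ?_
          calc ∑' f : Fin n → PTree, B ⟨n, f⟩
              = ∑' (f : Fin n → PTree) (g : Fin n → P),
                  b n γ g * ∏ i : Fin n, ρ (g i) * treeWk b ρ k (f i) (g i) := rfl
            _ = ∑' (g : Fin n → P) (f : Fin n → PTree),
                  b n γ g * ∏ i : Fin n, ρ (g i) * treeWk b ρ k (f i) (g i) :=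
                ENNReal.tsum_comm
            _ = ∑' g : Fin n → P,
                  b n γ g * ∑' f : Fin n → PTree,
                    ∏ i : Fin n, ρ (g i) * treeWk b ρ k (f i) (g i) := by
                refine tsum_congr fun g => ?_
                rw [ENNReal.tsum_mul_left]
            _ = ∑' g : Fin n → P, b n γ g * ∏ i : Fin n, ρ (g i) * Sk b ρ k (g i) := by
                refine tsum_congr fun g => ?_
                congr 1
                rw [tsum_pi_prod n (fun i t => ρ (g i) * treeWk b ρ k t (g i))]
                refine Finset.prod_congr rfl fun i _ => ?_
                rw [ENNReal.tsum_mul_left, ih]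

/-- Monotone convergence for `tsum` in `ℝ≥0∞`. -/
lemma tsum_iSup_mono {ι : Type*} (f : ℕ → ι → ℝ≥0∞) (hf : ∀ i, Monotone fun k => f k i) :
    ∑' i, ⨆ k, f k i = ⨆ k, ∑' i, f k i := by
  rw [ENNReal.tsum_eq_iSup_sum]
  have h1 : ∀ F : Finset ι, (∑ i ∈ F, ⨆ k, f k i) = ⨆ k, ∑ i ∈ F, f k i := fun F =>
    ENNReal.finsetSum_iSup_of_monotone fun i => hf i
  calc (⨆ F : Finset ι, ∑ i ∈ F, ⨆ k, f k i)
      = ⨆ F : Finset ι, ⨆ k, ∑ i ∈ F, f k i := by simp_rw [h1]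
    _ = ⨆ k, ⨆ F : Finset ι, ∑ i ∈ F, f k i := iSup_comm
    _ = ⨆ k, ∑' i, f k i := by simp_rw [← ENNReal.tsum_eq_iSup_sum]

end Stmt2Aux

/-- if `μ` is a fixed point of the map `T_γ(μ) = R_γ φ_γ(μ)`, where
`φ_γ(μ) = Σ_{n≥0} Σ_{(γ₁,…,γₙ)} bₙ(γ;γ₁,…,γₙ) μ_{γ₁}⋯μ_{γₙ}` (with `b₀ ≡ 1`), and
`0 ≤ ρ̃_γ ≤ R_γ` for all `γ`, then the sum over all planar rooted trees of the
corresponding weights pinned at `γ₀` converges and `ρ̃_{γ₀} Φ_{γ₀}(ρ̃) ≤ μ_{γ₀}`. -/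
theorem stmt2 {P : Type*} [Countable P]
    (b : (n : ℕ) → P → (Fin n → P) → ℝ≥0) (hb0 : ∀ γ g, b 0 γ g = 1)
    (R μ ρ : P → ℝ≥0)
    (hfix : ∀ γ : P, (μ γ : ℝ≥0∞) =
      (R γ : ℝ≥0∞) * ∑' n : ℕ, ∑' g : Fin n → P,
        (b n γ g : ℝ≥0∞) * ∏ i, (μ (g i) : ℝ≥0∞))
    (hρ : ∀ γ, ρ γ ≤ R γ) (γ₀ : P) :
    (ρ γ₀ : ℝ≥0∞) *
        ∑' t : PTree, treeW (fun n γ g => (b n γ g : ℝ≥0∞)) (fun γ => (ρ γ : ℝ≥0∞)) t γ₀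
      ≤ (μ γ₀ : ℝ≥0∞) := by
  set b' : (n : ℕ) → P → (Fin n → P) → ℝ≥0∞ := fun n γ g => (b n γ g : ℝ≥0∞) with hb'
  set ρ' : P → ℝ≥0∞ := fun γ => (ρ γ : ℝ≥0∞) with hρ'
  -- key bound on the iterates
  have key : ∀ (k : ℕ) (γ : P), ρ' γ * Stmt2Aux.Sk b' ρ' k γ ≤ (μ γ : ℝ≥0∞) := by
    intro k
    induction k with
    | zero => intro γ; simp [Stmt2Aux.Sk]
    | succ k ih =>
      intro γ
      have h1 : Stmt2Aux.Sk b' ρ' (k + 1) γ ≤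
          ∑' n : ℕ, ∑' g : Fin n → P, b' n γ g * ∏ i, (μ (g i) : ℝ≥0∞) := by
        simp only [Stmt2Aux.Sk]
        refine ENNReal.tsum_le_tsum fun n => ENNReal.tsum_le_tsum fun g => ?_
        gcongr with i
        exact ih (g i)
      calc ρ' γ * Stmt2Aux.Sk b' ρ' (k + 1) γ
          ≤ (R γ : ℝ≥0∞) * ∑' n : ℕ, ∑' g : Fin n → P, b' n γ g * ∏ i, (μ (g i) : ℝ≥0∞) := by
            exact mul_le_mul' (ENNReal.coe_le_coe.2 (hρ γ)) h1
        _ = (μ γ : ℝ≥0∞) := (hfix γ).symm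
  have h2 : ∑' t : PTree, treeW b' ρ' t γ₀ = ⨆ k, Stmt2Aux.Sk b' ρ' k γ₀ := by
    calc ∑' t : PTree, treeW b' ρ' t γ₀
        = ∑' t : PTree, ⨆ k, Stmt2Aux.treeWk b' ρ' k t γ₀ :=
          tsum_congr fun t => Stmt2Aux.treeW_eq_iSup b' ρ' t γ₀
      _ = ⨆ k, ∑' t : PTree, Stmt2Aux.treeWk b' ρ' k t γ₀ :=
          Stmt2Aux.tsum_iSup_mono _ fun t => Stmt2Aux.treeWk_mono b' ρ' t γ₀
      _ = ⨆ k, Stmt2Aux.Sk b' ρ' k γ₀ := by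
          simp_rw [Stmt2Aux.tsum_treeWk_eq]
  rw [h2, ENNReal.mul_iSup]
  exact iSup_le fun k => key k γ₀
end
end

section
/- Under the stability condition with function B, the Ursell coefficient satisfies the tree-graph bound |φᵀ(γ₁,...,γₙ)| ≤ e^{Σ_{i=1}^n B(γᵢ)} Σ_{τ ∈ Tₙ} ∏_{{i,j}∈E_τ} F(γᵢ,γⱼ), where Tₙ is the set of trees on vertex set {1,...,n} and F(γ,γ') = |e^{-V(γ,γ')} - 1| if γ ≁ γ' and F(γ,γ') = |V(γ,γ')| otherwise. -/
open scoped BigOperators ENNReal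
attribute [local instance] Classical.propDecidable
noncomputable section

/-- The Mayer factor `e^{-v} - 1`, with `e^{-∞} := 0`. -/
def eweight (v : EReal) : ℝ :=
  if v = ⊤ then -1 else Real.exp (-v.toReal) - 1

/-- Connectedness of an edge set on `{1,…,n}`. -/
def connEdges {n : ℕ} (E : Finset (Fin n × Fin n)) : Prop :=
  ∀ A : Finset (Fin n), A.Nonempty → (Finset.univ \ A).Nonempty →
    ∃ p ∈ E, (p.1 ∈ A ∧ p.2 ∉ A) ∨ (p.2 ∈ A ∧ p.1 ∉ A)

/-- Edge sets of connected graphs on `{1,…,n}` (edges encoded as ordered pairs `i < j`). -/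
def graphFinset (n : ℕ) : Finset (Finset (Fin n × Fin n)) :=
  Finset.univ.filter fun E => (∀ p ∈ E, p.1 < p.2) ∧ connEdges E

/-- Edge sets of trees on `{1,…,n}`: connected graphs with `n - 1` edges. -/
def treeFinset (n : ℕ) : Finset (Finset (Fin n × Fin n)) :=
  (graphFinset n).filter fun E => E.card = n - 1

/-- Total pair interaction energy `Σ_{1 ≤ i < j ≤ n} V(γ_i, γ_j)`. -/
def pairEnergy {P : Type*} (V : P → P → EReal) (n : ℕ) (γ : Fin n → P) : EReal :=
  ∑ p ∈ Finset.univ.filter (fun p : Fin n × Fin n => p.1 < p.2), V (γ p.1) (γ p.2)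

/-- The Ursell coefficient `φᵀ(γ₁,…,γₙ)`. -/
def ursell {P : Type*} (V : P → P → EReal) (n : ℕ) (γ : Fin n → P) : ℝ :=
  ∑ E ∈ graphFinset n, ∏ p ∈ E, eweight (V (γ p.1) (γ p.2))

/-- `F(γ,γ') = |e^{-V(γ,γ')} - 1| = 1` if `γ ≁ γ'`, and `F(γ,γ') = |V(γ,γ')|` otherwise. -/
def Freal {P : Type*} (V : P → P → EReal) (γ γ' : P) : ℝ :=
  if V γ γ' = ⊤ then 1 else |(V γ γ').toReal|

namespace TG

variable {n : ℕ}

/-- pairs within `S`, encoded as ordered pairs `i < j`. -/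
def pr (S : Finset (Fin n)) : Finset (Fin n × Fin n) :=
  (S ×ˢ S).filter fun p => p.1 < p.2

lemma mem_pr {S : Finset (Fin n)} {p : Fin n × Fin n} :
    p ∈ pr S ↔ p.1 ∈ S ∧ p.2 ∈ S ∧ p.1 < p.2 := by
  simp [pr, Finset.mem_filter, Finset.mem_product, and_assoc]

lemma pr_mono {S T : Finset (Fin n)} (h : S ⊆ T) : pr S ⊆ pr T := by
  intro p hp; rw [mem_pr] at *; exact ⟨h hp.1, h hp.2.1, hp.2.2⟩

lemma pr_singleton (r : Fin n) : pr ({r} : Finset (Fin n)) = ∅ := by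
  ext p; simp only [mem_pr, Finset.mem_singleton, Finset.notMem_empty, iff_false]
  rintro ⟨h1, h2, h3⟩; rw [h1, h2] at h3; exact lt_irrefl _ h3

/-- the pair `p` crosses the cut `A`. -/
def Xp (A : Finset (Fin n)) (p : Fin n × Fin n) : Prop :=
  (p.1 ∈ A ∧ p.2 ∉ A) ∨ (p.2 ∈ A ∧ p.1 ∉ A)

lemma not_xp_of_pr {C : Finset (Fin n)} {p : Fin n × Fin n} (hp : p ∈ pr C) : ¬ Xp C p := by
  rw [mem_pr] at hp
  rintro (⟨_, h⟩ | ⟨_, h⟩) <;> [exact h hp.2.1; exact h hp.1]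

/-- cut-connectivity of an edge set on the vertex set `S`. -/
def connOn (S : Finset (Fin n)) (E : Finset (Fin n × Fin n)) : Prop :=
  ∀ A ⊆ S, A.Nonempty → (S \ A).Nonempty → ∃ p ∈ E, Xp A p

/-- connectivity of `E` together with the complete graph on the cluster `C`. -/
def connQ (S C : Finset (Fin n)) (E : Finset (Fin n × Fin n)) : Prop :=
  ∀ A ⊆ S, A.Nonempty → (S \ A).Nonempty →
    ((C ∩ A).Nonempty ∧ (C \ A).Nonempty) ∨ ∃ p ∈ E, Xp A p

def graphsOn (S : Finset (Fin n)) : Finset (Finset (Fin n × Fin n)) :=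
  (pr S).powerset.filter (connOn S)

def treesOn (S : Finset (Fin n)) : Finset (Finset (Fin n × Fin n)) :=
  (graphsOn S).filter fun E => E.card + 1 = S.card

def mayer (x : ℝ) : ℝ := Real.exp (-x) - 1

lemma mayer_zero : mayer 0 = 0 := by simp [mayer]

lemma one_add_mayer (x : ℝ) : 1 + mayer x = Real.exp (-x) := by simp [mayer]

/-- admissible graphs for the cluster state `(S, C)`. -/
def PsiSet (S C : Finset (Fin n)) : Finset (Finset (Fin n × Fin n)) :=
  ((pr S) \ (pr C)).powerset.filter (connQ S C)

def Psi (u : Fin n × Fin n → ℝ) (S C : Finset (Fin n)) : ℝ :=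
  ∑ E ∈ PsiSet S C, ∏ p ∈ E, mayer (u p)

/-- boundary pairs of the cluster `C` in `S`. -/
def bd (C S : Finset (Fin n)) : Finset (Fin n × Fin n) :=
  (pr S).filter fun p => Xp C p

/-- the endpoint of a boundary pair outside the cluster. -/
def out (C : Finset (Fin n)) (p : Fin n × Fin n) : Fin n :=
  if p.1 ∈ C then p.2 else p.1

/-- pairs joining the new vertex `b` to the cluster `C`. -/
def Cb (C : Finset (Fin n)) (b : Fin n) : Finset (Fin n × Fin n) :=
  pr (insert b C) \ pr C

def mulbd (C : Finset (Fin n)) (t : ℝ) (u : Fin n × Fin n → ℝ) : Fin n × Fin n → ℝ :=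
  fun p => if Xp C p then t * u p else u p

/-- spanning trees of the contraction of `S` by the cluster `C`. -/
def Compl (S C : Finset (Fin n)) : Finset (Finset (Fin n × Fin n)) :=
  ((pr S) \ (pr C)).powerset.filter fun F => connQ S C F ∧ F.card + C.card = S.card

def MM (u : Fin n × Fin n → ℝ) (S C : Finset (Fin n)) : ℝ :=
  ∑ F ∈ Compl S C, ∏ p ∈ F, |u p|

def AA (u : Fin n × Fin n → ℝ) (C : Finset (Fin n)) : ℝ := ∑ p ∈ pr C, u p

/-- admissible interpolation states. -/
inductive Adm (S : Finset (Fin n)) (v : Fin n × Fin n → ℝ) :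
    Finset (Fin n) → (Fin n × Fin n → ℝ) → Prop
  | base (r : Fin n) (hr : r ∈ S) : Adm S v {r} v
  | step {C : Finset (Fin n)} {u : Fin n × Fin n → ℝ} (h : Adm S v C u) {b : Fin n}
      (hb : b ∈ S) (hbC : b ∉ C) {t : ℝ} (h0 : 0 ≤ t) (h1 : t ≤ 1) :
      Adm S v (insert b C) (mulbd C t u)

lemma Adm.subset {S v C u} (h : @Adm n S v C u) : C ⊆ S := by
  induction h with
  | base r hr => simpa using hr
  | step h hb hbC h0 h1 ih => exact Finset.insert_subset hb ih

lemma Adm.nonempty {S v C u} (h : @Adm n S v C u) : C.Nonempty := by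
  induction h with
  | base r hr => exact ⟨r, Finset.mem_singleton_self r⟩
  | step h hb hbC h0 h1 ih => exact Finset.insert_nonempty _ _

/- ### basic cut lemmas -/

lemma connQ_of_subset {S C : Finset (Fin n)} {E E' : Finset (Fin n × Fin n)}
    (h : connQ S C E) (hE : E ⊆ E') : connQ S C E' := by
  intro A hA h1 h2
  rcases h A hA h1 h2 with h' | ⟨p, hp, hx⟩
  · exact Or.inl h'
  · exact Or.inr ⟨p, hE hp, hx⟩

lemma connQ_cluster_mono {S C C' : Finset (Fin n)} {E : Finset (Fin n × Fin n)}
    (h : connQ S C E) (hC : C ⊆ C') : connQ S C' E := by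
  intro A hA h1 h2
  rcases h A hA h1 h2 with ⟨⟨x, hx⟩, ⟨y, hy⟩⟩ | h'
  · refine Or.inl ⟨⟨x, ?_⟩, ⟨y, ?_⟩⟩
    · rw [Finset.mem_inter] at hx ⊢; exact ⟨hC hx.1, hx.2⟩
    · rw [Finset.mem_sdiff] at hy ⊢; exact ⟨hC hy.1, hy.2⟩
  · exact Or.inr h'

/-- key transfer: shrinking the cluster, adding the linking pair. -/
lemma connQ_shrink {S C : Finset (Fin n)} {E : Finset (Fin n × Fin n)}
    {q : Fin n × Fin n} (hq1 : q.1 ∈ insert (out C q) C) (hq2 : q.2 ∈ insert (out C q) C)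
    (hxq : Xp C q)
    (h : connQ S (insert (out C q) C) E) : connQ S C (insert q E) := by
  intro A hA h1 h2
  rcases h A hA h1 h2 with ⟨⟨x, hx⟩, ⟨y, hy⟩⟩ | ⟨p, hp, hxp⟩
  · -- the enlarged cluster is split by A
    by_cases hCA : (C ∩ A).Nonempty
    · by_cases hCA' : (C \ A).Nonempty
      · exact Or.inl ⟨hCA, hCA'⟩
      · -- C ⊆ A; so the new vertex b is outside A, and q crosses A
        have hCsub : C ⊆ A := by
          intro c hc; by_contra hcA
          exact hCA' ⟨c, Finset.mem_sdiff.2 ⟨hc, hcA⟩⟩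
        -- y ∈ insert b C \ A, so y = b := out C q, y ∉ A
        rw [Finset.mem_sdiff, Finset.mem_insert] at hy
        rcases hy with ⟨hy1 | hy1, hy2⟩
        · -- y = out C q ∉ A; q has one endpoint in C ⊆ A and one = out ∉ A
          refine Or.inr ⟨q, Finset.mem_insert_self _ _, ?_⟩
          rcases hxq with ⟨hq1', hq2'⟩ | ⟨hq1', hq2'⟩
          · -- q.1 ∈ C, q.2 ∉ C so out C q = q.2
            have hout : out C q = q.2 := by simp [out, hq1']
            exact Or.inl ⟨hCsub hq1', by rw [← hout, ← hy1]; exact hy2⟩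
          · have hout : out C q = q.1 := by
              have : q.1 ∈ C → False := hq2'
              simp [out, hq2']
            exact Or.inr ⟨hCsub hq1', by rw [← hout, ← hy1]; exact hy2⟩
        · exact absurd (Finset.mem_sdiff.2 ⟨hy1, hy2⟩) (by intro hc; exact hCA' ⟨y, hc⟩)
    · -- C ∩ A = ∅; so x (in the enlarged cluster ∩ A) must be b, b ∈ A, q crosses
      rw [Finset.mem_inter, Finset.mem_insert] at hx
      rcases hx with ⟨hx1 | hx1, hx2⟩
      · refine Or.inr ⟨q, Finset.mem_insert_self _ _, ?_⟩
        have hCnA : ∀ c ∈ C, c ∉ A := by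
          intro c hc hcA; exact hCA ⟨c, Finset.mem_inter.2 ⟨hc, hcA⟩⟩
        rcases hxq with ⟨hq1', hq2'⟩ | ⟨hq1', hq2'⟩
        · have hout : out C q = q.2 := by simp [out, hq1']
          exact Or.inr ⟨by rw [← hout, ← hx1]; exact hx2, hCnA _ hq1'⟩
        · have hout : out C q = q.1 := by simp [out, hq2']
          exact Or.inl ⟨by rw [← hout, ← hx1]; exact hx2, hCnA _ hq1'⟩
      · exact absurd ⟨x, Finset.mem_inter.2 ⟨hx1, hx2⟩⟩ hCA
  · exact Or.inr ⟨p, Finset.mem_insert_of_mem hp, hxp⟩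

/-- key transfer: growing the cluster along a boundary pair of `E`. -/
lemma connQ_grow {S C : Finset (Fin n)} {E : Finset (Fin n × Fin n)}
    {q : Fin n × Fin n} (hq : q ∈ E) (hq1 : q.1 ∈ insert (out C q) C)
    (hq2 : q.2 ∈ insert (out C q) C)
    (h : connQ S C E) : connQ S (insert (out C q) C) (E.erase q) := by
  intro A hA h1 h2
  rcases h A hA h1 h2 with ⟨⟨x, hx⟩, ⟨y, hy⟩⟩ | ⟨p, hp, hxp⟩
  · refine Or.inl ⟨⟨x, ?_⟩, ⟨y, ?_⟩⟩
    · rw [Finset.mem_inter] at hx ⊢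
      exact ⟨Finset.mem_insert_of_mem hx.1, hx.2⟩
    · rw [Finset.mem_sdiff] at hy ⊢
      exact ⟨Finset.mem_insert_of_mem hy.1, hy.2⟩
  · by_cases hpq : p = q
    · -- q itself crosses A; its endpoints are in the enlarged cluster: cluster is split
      subst hpq
      rcases hxp with ⟨ha1, ha2⟩ | ⟨ha1, ha2⟩
      · exact Or.inl ⟨⟨p.1, Finset.mem_inter.2 ⟨hq1, ha1⟩⟩,
          ⟨p.2, Finset.mem_sdiff.2 ⟨hq2, ha2⟩⟩⟩
      · exact Or.inl ⟨⟨p.2, Finset.mem_inter.2 ⟨hq2, ha1⟩⟩,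
          ⟨p.1, Finset.mem_sdiff.2 ⟨hq1, ha2⟩⟩⟩
    · exact Or.inr ⟨p, Finset.mem_erase.2 ⟨hpq, hp⟩, hxp⟩

lemma connQ_exists_bd {S C : Finset (Fin n)} {E : Finset (Fin n × Fin n)}
    (h : connQ S C E) (hCS : C ⊆ S) (hC : C.Nonempty) (hSC : (S \ C).Nonempty) :
    ∃ p ∈ E, Xp C p := by
  rcases h C hCS hC hSC with ⟨_, ⟨y, hy⟩⟩ | h'
  · rw [Finset.mem_sdiff] at hy; exact absurd hy.1 hy.2
  · exact h'

lemma connQ_self (S : Finset (Fin n)) (E : Finset (Fin n × Fin n)) : connQ S S E := by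
  intro A hA h1 h2
  refine Or.inl ⟨?_, ?_⟩
  · rcases h1 with ⟨x, hx⟩; exact ⟨x, Finset.mem_inter.2 ⟨hA hx, hx⟩⟩
  · rcases h2 with ⟨y, hy⟩; rw [Finset.mem_sdiff] at hy
    exact ⟨y, Finset.mem_sdiff.2 hy⟩

lemma connQ_singleton {S : Finset (Fin n)} {r : Fin n} {E : Finset (Fin n × Fin n)} :
    connQ S {r} E ↔ connOn S E := by
  constructor
  · intro h A hA h1 h2
    rcases h A hA h1 h2 with ⟨⟨x, hx⟩, ⟨y, hy⟩⟩ | h'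
    · rw [Finset.mem_inter, Finset.mem_singleton] at hx
      rw [Finset.mem_sdiff, Finset.mem_singleton] at hy
      have hrA : r ∈ A := by rw [← hx.1]; exact hx.2
      have hrA' : r ∉ A := by rw [← hy.1]; exact hy.2
      exact absurd hrA hrA'
    · exact h'
  · intro h A hA h1 h2; exact Or.inr (h A hA h1 h2)


/- ### reachability -/

def rel (E : Finset (Fin n × Fin n)) (x y : Fin n) : Prop := (x, y) ∈ E ∨ (y, x) ∈ E

lemma rel_mono {E E' : Finset (Fin n × Fin n)} (h : E ⊆ E') {x y : Fin n} :
    rel E x y → rel E' x y := by rintro (h' | h') <;> [exact Or.inl (h h'); exact Or.inr (h h')]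

lemma rel_ends {S : Finset (Fin n)} {E : Finset (Fin n × Fin n)} (hE : E ⊆ pr S)
    {x y : Fin n} (h : rel E x y) : x ∈ S ∧ y ∈ S := by
  rcases h with h | h <;> have := mem_pr.1 (hE h)
  · exact ⟨this.1, this.2.1⟩
  · exact ⟨this.2.1, this.1⟩

def RG (E : Finset (Fin n × Fin n)) : Fin n → Fin n → Prop := Relation.ReflTransGen (rel E)

def reachS (S : Finset (Fin n)) (E : Finset (Fin n × Fin n)) (a : Fin n) : Finset (Fin n) :=
  S.filter (RG E a)

lemma reach_in_S {S : Finset (Fin n)} {E : Finset (Fin n × Fin n)} (hE : E ⊆ pr S)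
    {a z : Fin n} (ha : a ∈ S) (h : RG E a z) : z ∈ S := by
  induction h with
  | refl => exact ha
  | tail _ hrel _ => exact (rel_ends hE hrel).2

lemma mem_reachS {S E} {a x : Fin n} : x ∈ reachS S E a ↔ x ∈ S ∧ RG E a x := by
  simp [reachS, Finset.mem_filter]

/-- a path with endpoints on different sides of `A` crosses `A`. -/
lemma cross_of_path {E : Finset (Fin n × Fin n)} {A : Finset (Fin n)} {x y : Fin n}
    (h : RG E x y) (hxy : ¬ (x ∈ A ↔ y ∈ A)) : ∃ p ∈ E, Xp A p := by
  induction h with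
  | refl => exact absurd Iff.rfl hxy
  | @tail b c hab hrel ih =>
    by_cases hb : x ∈ A ↔ b ∈ A
    · have hbc : ¬ (b ∈ A ↔ c ∈ A) := fun hh => hxy (hb.trans hh)
      rcases hrel with h' | h'
      · refine ⟨(b, c), h', ?_⟩
        by_cases h1 : b ∈ A
        · exact Or.inl ⟨h1, fun h2 => hbc ⟨fun _ => h2, fun _ => h1⟩⟩
        · refine Or.inr ⟨?_, h1⟩
          by_contra h2
          exact hbc ⟨fun hh => absurd hh h1, fun hh => absurd hh h2⟩
      · refine ⟨(c, b), h', ?_⟩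
        by_cases h1 : b ∈ A
        · exact Or.inr ⟨h1, fun h2 => hbc ⟨fun _ => h2, fun _ => h1⟩⟩
        · refine Or.inl ⟨?_, h1⟩
          by_contra h2
          exact hbc ⟨fun hh => absurd hh h1, fun hh => absurd hh h2⟩
    · exact ih hb

lemma reach_of_connOn {S : Finset (Fin n)} {E : Finset (Fin n × Fin n)} (hE : E ⊆ pr S)
    (hc : connOn S E) {a x : Fin n} (ha : a ∈ S) (hx : x ∈ S) : RG E a x := by
  by_contra hax
  have hne : (reachS S E a).Nonempty := ⟨a, mem_reachS.2 ⟨ha, Relation.ReflTransGen.refl⟩⟩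
  have hne' : (S \ reachS S E a).Nonempty :=
    ⟨x, Finset.mem_sdiff.2 ⟨hx, fun hh => hax (mem_reachS.1 hh).2⟩⟩
  obtain ⟨p, hp, hxp⟩ := hc (reachS S E a) (Finset.filter_subset _ _) hne hne'
  rcases hxp with ⟨h1, h2⟩ | ⟨h1, h2⟩
  · exact h2 (mem_reachS.2 ⟨(mem_pr.1 (hE hp)).2.1,
      Relation.ReflTransGen.tail (mem_reachS.1 h1).2 (Or.inl hp)⟩)
  · exact h2 (mem_reachS.2 ⟨(mem_pr.1 (hE hp)).1,
      Relation.ReflTransGen.tail (mem_reachS.1 h1).2 (Or.inr hp)⟩)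

lemma connOn_of_reach {S : Finset (Fin n)} {E : Finset (Fin n × Fin n)}
    {a : Fin n} (ha : a ∈ S) (h : ∀ x ∈ S, RG E a x) : connOn S E := by
  intro A hA h1 h2
  rcases h1 with ⟨x, hx⟩
  rcases h2 with ⟨y, hy⟩
  rw [Finset.mem_sdiff] at hy
  by_cases haA : a ∈ A
  · exact cross_of_path (h y hy.1) (fun hh => hy.2 (hh.1 haA))
  · exact cross_of_path (h x (hA hx)) (fun hh => haA (hh.2 hx))

/-- paths localize to the reachable set. -/
lemma reach_localize {S : Finset (Fin n)} {E : Finset (Fin n × Fin n)} (hE : E ⊆ pr S)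
    {a z : Fin n} (ha : a ∈ S) (h : RG E a z) :
    RG (E.filter fun p => p.1 ∈ reachS S E a) a z := by
  induction h with
  | refl => exact Relation.ReflTransGen.refl
  | @tail b c hab hrel ih =>
    refine Relation.ReflTransGen.tail ih ?_
    have hbS : b ∈ S := reach_in_S hE ha hab
    have hbA : b ∈ reachS S E a := mem_reachS.2 ⟨hbS, hab⟩
    have hcA : c ∈ reachS S E a := by
      refine mem_reachS.2 ⟨(rel_ends hE hrel).2, Relation.ReflTransGen.tail hab hrel⟩
    rcases hrel with h' | h'
    · exact Or.inl (Finset.mem_filter.2 ⟨h', hbA⟩)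
    · exact Or.inr (Finset.mem_filter.2 ⟨h', hcA⟩)

/-- edges do not cross the reachable set. -/
lemma reach_no_cross {S : Finset (Fin n)} {E : Finset (Fin n × Fin n)} (hE : E ⊆ pr S)
    {a : Fin n} (ha : a ∈ S) {p : Fin n × Fin n} (hp : p ∈ E) :
    (p.1 ∈ reachS S E a ↔ p.2 ∈ reachS S E a) := by
  have h1 := (mem_pr.1 (hE hp)).1
  have h2 := (mem_pr.1 (hE hp)).2.1
  constructor
  · intro h; exact mem_reachS.2 ⟨h2, Relation.ReflTransGen.tail (mem_reachS.1 h).2 (Or.inl hp)⟩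
  · intro h; exact mem_reachS.2 ⟨h1, Relation.ReflTransGen.tail (mem_reachS.1 h).2 (Or.inr hp)⟩

/-- reach of a disjointly supported union. -/
lemma reach_union {S A : Finset (Fin n)} {h₁ h₂ : Finset (Fin n × Fin n)}
    (hA : A ⊆ S) (h1 : h₁ ⊆ pr A) (h2 : h₂ ⊆ pr (S \ A)) {a : Fin n} (ha : a ∈ A)
    (hc : connOn A h₁) : reachS S (h₁ ∪ h₂) a = A := by
  apply Finset.Subset.antisymm
  · intro x hx
    rcases mem_reachS.1 hx with ⟨hxS, hpath⟩
    clear hx hxS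
    induction hpath with
    | refl => exact ha
    | @tail b c hab hrel ih =>
      have hbA : b ∈ A := ih
      rcases hrel with h' | h' <;> rcases Finset.mem_union.1 h' with hh | hh
      · exact (mem_pr.1 (h1 hh)).2.1
      · exact absurd hbA (Finset.mem_sdiff.1 (mem_pr.1 (h2 hh)).1).2
      · exact (mem_pr.1 (h1 hh)).1
      · exact absurd hbA (Finset.mem_sdiff.1 (mem_pr.1 (h2 hh)).2.1).2
  · intro x hx
    refine mem_reachS.2 ⟨hA hx, ?_⟩
    exact Relation.ReflTransGen.mono (fun _ _ => rel_mono Finset.subset_union_left) _ _ (reach_of_connOn h1 hc ha hx)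

/-- shortcut: if `b` is already reachable, adding the pair `e = (a,b)` adds nothing. -/
lemma reach_shortcut {h : Finset (Fin n × Fin n)} {e : Fin n × Fin n} {a b z : Fin n}
    (he : e = (a, b)) (hab : RG h a b) (hz : RG (insert e h) a z) : RG h a z := by
  induction hz with
  | refl => exact Relation.ReflTransGen.refl
  | @tail c d hac hrel ih =>
    rcases hrel with h' | h' <;> rcases Finset.mem_insert.1 h' with hh | hh
    · -- (c, d) = e = (a, b): d = b
      have : c = a ∧ d = b := by
        rw [he] at hh; exact ⟨congrArg Prod.fst hh, congrArg Prod.snd hh⟩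
      rw [this.2]; exact hab
    · exact Relation.ReflTransGen.tail ih (Or.inl hh)
    · -- (d, c) = e = (a, b): d = a
      have : d = a ∧ c = b := by
        rw [he] at hh; exact ⟨congrArg Prod.fst hh, congrArg Prod.snd hh⟩
      rw [this.1]; exact Relation.ReflTransGen.refl
    · exact Relation.ReflTransGen.tail ih (Or.inr hh)

/-- gluing two connected pieces by one crossing pair. -/
lemma connOn_glue {S A : Finset (Fin n)} {h₁ h₂ : Finset (Fin n × Fin n)}
    {e : Fin n × Fin n} {a b : Fin n}
    (hA : A ⊆ S) (ha : a ∈ A) (hb : b ∈ S \ A)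
    (hsub1 : h₁ ⊆ pr A) (hsub2 : h₂ ⊆ pr (S \ A))
    (hc1 : connOn A h₁) (hc2 : connOn (S \ A) h₂)
    (he : e = (a, b) ∨ e = (b, a)) :
    connOn S (insert e (h₁ ∪ h₂)) := by
  intro A' hA' hne1 hne2
  by_cases c1 : (A ∩ A').Nonempty ∧ (A \ (A ∩ A')).Nonempty
  · obtain ⟨p, hp, hxp⟩ := hc1 (A ∩ A') Finset.inter_subset_left c1.1 c1.2
    refine ⟨p, Finset.mem_insert_of_mem (Finset.mem_union_left _ hp), ?_⟩
    have hp1 := (mem_pr.1 (hsub1 hp)).1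
    have hp2 := (mem_pr.1 (hsub1 hp)).2.1
    rcases hxp with ⟨u1, u2⟩ | ⟨u1, u2⟩
    · exact Or.inl ⟨(Finset.mem_inter.1 u1).2, fun hh => u2 (Finset.mem_inter.2 ⟨hp2, hh⟩)⟩
    · exact Or.inr ⟨(Finset.mem_inter.1 u1).2, fun hh => u2 (Finset.mem_inter.2 ⟨hp1, hh⟩)⟩
  by_cases c2 : ((S \ A) ∩ A').Nonempty ∧ ((S \ A) \ ((S \ A) ∩ A')).Nonempty
  · obtain ⟨p, hp, hxp⟩ := hc2 ((S \ A) ∩ A') Finset.inter_subset_left c2.1 c2.2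
    refine ⟨p, Finset.mem_insert_of_mem (Finset.mem_union_right _ hp), ?_⟩
    have hp1 := (mem_pr.1 (hsub2 hp)).1
    have hp2 := (mem_pr.1 (hsub2 hp)).2.1
    rcases hxp with ⟨u1, u2⟩ | ⟨u1, u2⟩
    · exact Or.inl ⟨(Finset.mem_inter.1 u1).2, fun hh => u2 (Finset.mem_inter.2 ⟨hp2, hh⟩)⟩
    · exact Or.inr ⟨(Finset.mem_inter.1 u1).2, fun hh => u2 (Finset.mem_inter.2 ⟨hp1, hh⟩)⟩
  -- now A and S\A are each entirely inside or outside A'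
  · have hsplit : ∀ (X : Finset (Fin n)), ¬ ((X ∩ A').Nonempty ∧ (X \ (X ∩ A')).Nonempty) →
        (∀ x ∈ X, x ∈ A') ∨ (∀ x ∈ X, x ∉ A') := by
      intro X hX
      by_cases hint : (X ∩ A').Nonempty
      · left; intro x hx
        by_contra hxA
        exact hX ⟨hint, ⟨x, Finset.mem_sdiff.2 ⟨hx, fun hh => hxA (Finset.mem_inter.1 hh).2⟩⟩⟩
      · right; intro x hx hxA
        exact hint ⟨x, Finset.mem_inter.2 ⟨hx, hxA⟩⟩
    have d1 := hsplit A c1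
    have d2 := hsplit (S \ A) c2
    rcases d1 with d1 | d1 <;> rcases d2 with d2 | d2
    · -- S ⊆ A', contradiction with S \ A' nonempty
      exfalso
      rcases hne2 with ⟨y, hy⟩
      rw [Finset.mem_sdiff] at hy
      by_cases hyA : y ∈ A
      · exact hy.2 (d1 y hyA)
      · exact hy.2 (d2 y (Finset.mem_sdiff.2 ⟨hy.1, hyA⟩))
    · -- A ⊆ A', (S\A) ∩ A' = ∅ : e crosses
      refine ⟨e, Finset.mem_insert_self _ _, ?_⟩
      have haA' : a ∈ A' := d1 a ha
      have hbA' : b ∉ A' := d2 b hb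
      rcases he with he | he <;> rw [he]
      · exact Or.inl ⟨haA', hbA'⟩
      · exact Or.inr ⟨haA', hbA'⟩
    · refine ⟨e, Finset.mem_insert_self _ _, ?_⟩
      have haA' : a ∉ A' := d1 a ha
      have hbA' : b ∈ A' := d2 b hb
      rcases he with he | he <;> rw [he]
      · exact Or.inr ⟨hbA', haA'⟩
      · exact Or.inl ⟨hbA', haA'⟩
    · -- A' ∩ S = ∅, contradiction with A' nonempty
      exfalso
      rcases hne1 with ⟨x, hx⟩
      have hxS : x ∈ S := hA' hx
      by_cases hxA : x ∈ A
      · exact d1 x hxA hx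
      · exact d2 x (Finset.mem_sdiff.2 ⟨hxS, hxA⟩) hx


/- ### small structural lemmas about `out`, `Cb` -/

lemma out_not_mem {C : Finset (Fin n)} {q : Fin n × Fin n} (h : Xp C q) : out C q ∉ C := by
  rcases h with ⟨h1, h2⟩ | ⟨h1, h2⟩
  · simpa [out, h1] using h2
  · have : ¬ q.1 ∈ C := h2
    simpa [out, this] using h2

lemma out_ends {C : Finset (Fin n)} {q : Fin n × Fin n} (h : Xp C q) :
    q.1 ∈ insert (out C q) C ∧ q.2 ∈ insert (out C q) C := by
  rcases h with ⟨h1, h2⟩ | ⟨h1, h2⟩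
  · have : out C q = q.2 := by simp [out, h1]
    exact ⟨Finset.mem_insert_of_mem h1, by rw [this]; exact Finset.mem_insert_self _ _⟩
  · have : out C q = q.1 := by simp [out, h2]
    exact ⟨by rw [this]; exact Finset.mem_insert_self _ _, Finset.mem_insert_of_mem h1⟩

lemma out_mem_S {S C : Finset (Fin n)} {q : Fin n × Fin n} (hq : q ∈ pr S) : out C q ∈ S := by
  rcases mem_pr.1 hq with ⟨h1, h2, _⟩
  unfold out; split <;> assumption

lemma mem_bd {S C : Finset (Fin n)} {p : Fin n × Fin n} :
    p ∈ bd C S ↔ p ∈ pr S ∧ Xp C p := by simp [bd, Finset.mem_filter]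

lemma bd_mem_Cb {S C : Finset (Fin n)} {q : Fin n × Fin n} (hq : q ∈ bd C S) :
    q ∈ Cb C (out C q) := by
  rcases mem_bd.1 hq with ⟨hq1, hq2⟩
  have he := out_ends hq2
  rw [Cb, Finset.mem_sdiff]
  constructor
  · exact mem_pr.2 ⟨he.1, he.2, (mem_pr.1 hq1).2.2⟩
  · intro hc
    have hno := out_not_mem hq2
    rcases mem_pr.1 hc with ⟨c1, c2, _⟩
    rcases hq2 with ⟨u1, u2⟩ | ⟨u1, u2⟩ <;> [exact u2 c2; exact u2 c1]

lemma Xp_of_Cb {C : Finset (Fin n)} {b : Fin n} (hb : b ∉ C) {p : Fin n × Fin n}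
    (hp : p ∈ Cb C b) : Xp C p := by
  rw [Cb, Finset.mem_sdiff] at hp
  rcases mem_pr.1 hp.1 with ⟨h1, h2, hlt⟩
  rcases Finset.mem_insert.1 h1 with e1 | e1 <;> rcases Finset.mem_insert.1 h2 with e2 | e2
  · exact absurd (e2 ▸ e1 : p.1 = p.2) (ne_of_lt hlt)
  · exact Or.inr ⟨e2, by rw [e1]; exact hb⟩
  · exact Or.inl ⟨e1, by rw [e2]; exact hb⟩
  · exact absurd (mem_pr.2 ⟨e1, e2, hlt⟩) hp.2

lemma pr_insert_eq {C : Finset (Fin n)} {b : Fin n} :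
    pr (insert b C) = pr C ∪ Cb C b := by
  rw [Cb, Finset.union_sdiff_self_eq_union]
  exact (Finset.union_eq_right.2 (pr_mono (Finset.subset_insert _ _))).symm

lemma Cb_disj {C : Finset (Fin n)} {b : Fin n} : Disjoint (pr C) (Cb C b) :=
  Finset.disjoint_sdiff

/- ### edge-count lower bound for connectivity -/

lemma card_lb {S : Finset (Fin n)} :
    ∀ (k : ℕ) (C F : Finset _), C ⊆ S → C.Nonempty → F ⊆ pr S → connQ S C F →
      S.card - C.card ≤ k → S.card ≤ F.card + C.card := by
  intro k
  induction k with
  | zero =>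
    intro C F hCS _ _ _ hk
    have : S.card ≤ C.card := by omega
    omega
  | succ k ih =>
    intro C F hCS hC hF hconn hk
    by_cases hle : S.card ≤ C.card
    · omega
    · have hSC : (S \ C).Nonempty := by
        rw [← Finset.card_pos, Finset.card_sdiff_of_subset hCS]; omega
      obtain ⟨q, hqF, hxq⟩ := connQ_exists_bd hconn hCS hC hSC
      have hqS : q ∈ pr S := hF hqF
      have hends := out_ends hxq
      have hbC : out C q ∉ C := out_not_mem hxq
      have hbS : out C q ∈ S := out_mem_S hqS
      have hgrow := connQ_grow hqF hends.1 hends.2 hconn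
      have hrec := ih (insert (out C q) C) (F.erase q)
        (Finset.insert_subset hbS hCS) (Finset.insert_nonempty _ _)
        ((Finset.erase_subset _ _).trans hF) hgrow
        (by rw [Finset.card_insert_of_notMem hbC]; omega)
      have h1 : (F.erase q).card = F.card - 1 := Finset.card_erase_of_mem hqF
      have h2 : 1 ≤ F.card := Finset.card_pos.2 ⟨q, hqF⟩
      rw [Finset.card_insert_of_notMem hbC] at hrec
      omega

/- ### sums over graphs -/

def UOn (w : Fin n × Fin n → ℝ) (S : Finset (Fin n)) : ℝ :=
  ∑ E ∈ graphsOn S, ∏ p ∈ E, w p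

def TOn (g : Fin n × Fin n → ℝ) (S : Finset (Fin n)) : ℝ :=
  ∑ F ∈ treesOn S, ∏ p ∈ F, g p

lemma mem_graphsOn {S : Finset (Fin n)} {E : Finset (Fin n × Fin n)} :
    E ∈ graphsOn S ↔ E ⊆ pr S ∧ connOn S E := by
  simp [graphsOn, Finset.mem_filter, Finset.mem_powerset]

lemma mem_treesOn {S : Finset (Fin n)} {E : Finset (Fin n × Fin n)} :
    E ∈ treesOn S ↔ E ⊆ pr S ∧ connOn S E ∧ E.card + 1 = S.card := by
  simp [treesOn, Finset.mem_filter, mem_graphsOn, and_assoc]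

lemma connOn_mono {S : Finset (Fin n)} {E E' : Finset (Fin n × Fin n)} (hE : E ⊆ E')
    (h : connOn S E) : connOn S E' := by
  intro A hA h1 h2
  obtain ⟨p, hp, hxp⟩ := h A hA h1 h2
  exact ⟨p, hE hp, hxp⟩

/- ### the hard-core splitting identity -/

lemma hc_split {w : Fin n × Fin n → ℝ} {S : Finset (Fin n)} {e : Fin n × Fin n}
    (he : e ∈ pr S) (hwe : w e = -1) :
    UOn w S = -∑ A ∈ (S.erase e.2).powerset.filter (fun A => e.1 ∈ A),
      UOn w A * UOn w (S \ A) := by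
  obtain ⟨haS, hbS, hab⟩ := mem_pr.1 he
  set a := e.1 with ha_def
  set b := e.2 with hb_def
  have heab : e = (a, b) := rfl
  -- the set D of graphs h with e ∉ h and insert e h connected
  set D := (pr S).powerset.filter (fun h => e ∉ h ∧ connOn S (insert e h)) with hD
  -- split off the graphs containing e
  have step1 : UOn w S =
      (∑ E ∈ graphsOn S with e ∉ E, ∏ p ∈ E, w p) +
      (∑ E ∈ graphsOn S with e ∈ E, ∏ p ∈ E, w p) := by
    rw [UOn, ← Finset.sum_filter_add_sum_filter_not (graphsOn S) (fun E => e ∉ E)]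
    simp only [not_not]
  -- graphs containing e ↔ D via erase/insert
  have step2 : (∑ E ∈ graphsOn S with e ∈ E, ∏ p ∈ E, w p) =
      w e * ∑ h ∈ D, ∏ p ∈ h, w p := by
    rw [Finset.mul_sum]
    refine Finset.sum_nbij' (fun E => E.erase e) (fun h => insert e h) ?_ ?_ ?_ ?_ ?_
    · intro E hE
      rcases Finset.mem_filter.1 hE with ⟨hE1, hE2⟩
      rcases mem_graphsOn.1 hE1 with ⟨hs, hc⟩
      refine Finset.mem_filter.2 ⟨Finset.mem_powerset.2 ((Finset.erase_subset _ _).trans hs),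
        Finset.notMem_erase _ _, ?_⟩
      rwa [Finset.insert_erase hE2]
    · intro h hh
      rcases Finset.mem_filter.1 hh with ⟨hh1, hh2, hh3⟩
      refine Finset.mem_filter.2 ⟨mem_graphsOn.2 ⟨?_, hh3⟩, Finset.mem_insert_self _ _⟩
      exact Finset.insert_subset he (Finset.mem_powerset.1 hh1)
    · intro E hE
      exact Finset.insert_erase (Finset.mem_filter.1 hE).2
    · intro h hh
      exact Finset.erase_insert (Finset.mem_filter.1 hh).2.1
    · intro E hE
      exact (Finset.mul_prod_erase _ _ (Finset.mem_filter.1 hE).2).symm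
  -- split D into connected and disconnected parts
  have step3 : (∑ h ∈ D, ∏ p ∈ h, w p) =
      (∑ E ∈ graphsOn S with e ∉ E, ∏ p ∈ E, w p) +
      (∑ h ∈ D with ¬ connOn S h, ∏ p ∈ h, w p) := by
    rw [← Finset.sum_filter_add_sum_filter_not D (fun h => connOn S h)]
    congr 1
    apply Finset.sum_congr _ (fun _ _ => rfl)
    ext h
    simp only [Finset.mem_filter, hD, Finset.mem_powerset, mem_graphsOn]
    constructor
    · rintro ⟨⟨h1, h2, h3⟩, h4⟩; exact ⟨⟨h1, h4⟩, h2⟩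
    · rintro ⟨⟨h1, h4⟩, h2⟩
      exact ⟨⟨h1, h2, connOn_mono (Finset.subset_insert _ _) h4⟩, h4⟩
  have key : UOn w S = - ∑ h ∈ D with ¬ connOn S h, ∏ p ∈ h, w p := by
    rw [step1, step2, step3, hwe]; ring
  rw [key]
  congr 1
  -- the classification of disconnected h by the component of a
  have main : ∀ h ∈ D.filter (fun h => ¬ connOn S h),
      h ∈ D.filter (fun h => ¬ connOn S h) := fun _ h => h
  -- rewrite RHS as a sigma sum
  have rhs : ∑ A ∈ (S.erase b).powerset.filter (fun A => a ∈ A), UOn w A * UOn w (S \ A) =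
      ∑ x ∈ ((S.erase b).powerset.filter (fun A => a ∈ A)).sigma
        (fun A => graphsOn A ×ˢ graphsOn (S \ A)),
        (∏ p ∈ x.2.1, w p) * (∏ p ∈ x.2.2, w p) := by
    rw [Finset.sum_sigma]
    refine Finset.sum_congr rfl fun A hA => ?_
    rw [UOn, UOn, Finset.sum_mul_sum, Finset.sum_product]
  rw [rhs]
  -- the bijection
  refine Finset.sum_nbij'
    (fun h => ⟨reachS S h a, (h.filter (fun p => p.1 ∈ reachS S h a),
        h.filter (fun p => p.1 ∉ reachS S h a))⟩)
    (fun x => x.2.1 ∪ x.2.2) ?_ ?_ ?_ ?_ ?_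
  · -- forward membership
    intro h hh
    rcases Finset.mem_filter.1 hh with ⟨hhD, hdisc⟩
    rcases Finset.mem_filter.1 hhD with ⟨hsub', heh, hconn'⟩
    have hsub : h ⊆ pr S := Finset.mem_powerset.1 hsub'
    set A := reachS S h a with hA_def
    have haA : a ∈ A := mem_reachS.2 ⟨haS, Relation.ReflTransGen.refl⟩
    have hAS : A ⊆ S := Finset.filter_subset _ _
    have hbA : b ∉ A := by
      intro hbA
      have hreach : ∀ x ∈ S, RG h a x := by
        intro x hx
        have h1 : RG (insert e h) a x :=
          reach_of_connOn (Finset.insert_subset he hsub) hconn' haS hx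
        exact reach_shortcut heab (mem_reachS.1 hbA).2 h1
      exact hdisc (connOn_of_reach haS hreach)
    refine Finset.mem_sigma.2 ⟨?_, ?_⟩
    · refine Finset.mem_filter.2 ⟨Finset.mem_powerset.2 ?_, haA⟩
      intro x hx
      exact Finset.mem_erase.2 ⟨fun hxb => hbA (hxb ▸ hx), hAS hx⟩
    · refine Finset.mem_product.2 ⟨?_, ?_⟩
      · refine mem_graphsOn.2 ⟨?_, ?_⟩
        · intro p hp
          rcases Finset.mem_filter.1 hp with ⟨hph, hp1⟩
          have hp2 : p.2 ∈ A := (reach_no_cross hsub haS hph).1 hp1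
          exact mem_pr.2 ⟨hp1, hp2, (mem_pr.1 (hsub hph)).2.2⟩
        · refine connOn_of_reach haA (fun x hx => ?_)
          exact reach_localize hsub haS (mem_reachS.1 hx).2
      · refine mem_graphsOn.2 ⟨?_, ?_⟩
        · intro p hp
          rcases Finset.mem_filter.1 hp with ⟨hph, hp1⟩
          have hp2 : p.2 ∉ A := fun hc => hp1 ((reach_no_cross hsub haS hph).2 hc)
          have hpS := mem_pr.1 (hsub hph)
          exact mem_pr.2 ⟨Finset.mem_sdiff.2 ⟨hpS.1, hp1⟩,
            Finset.mem_sdiff.2 ⟨hpS.2.1, hp2⟩, hpS.2.2⟩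
        · -- connectivity of the outer part, from paths in insert e h
          have hbSA : b ∈ S \ A := Finset.mem_sdiff.2 ⟨hbS, hbA⟩
          refine connOn_of_reach hbSA (fun x hx => ?_)
          rcases Finset.mem_sdiff.1 hx with ⟨hxS, hxA⟩
          have hpath : RG (insert e h) a x :=
            reach_of_connOn (Finset.insert_subset he hsub) hconn' haS hxS
          -- split the path
          have split : ∀ z, RG (insert e h) a z →
              z ∈ A ∨ (z ∉ A ∧ RG (h.filter (fun p => p.1 ∉ A)) b z) := by
            intro z hz
            induction hz with
            | refl => exact Or.inl haA
            | @tail c d hac hrel ihz =>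
              rcases ihz with hcA | ⟨hcA, hbc⟩
              · rcases hrel with h' | h' <;> rcases Finset.mem_insert.1 h' with hh' | hh'
                · have : c = a ∧ d = b := by
                    rw [heab] at hh'
                    exact ⟨congrArg Prod.fst hh', congrArg Prod.snd hh'⟩
                  rw [this.2]
                  exact Or.inr ⟨hbA, Relation.ReflTransGen.refl⟩
                · have hd : d ∈ A := by
                    have := reach_no_cross hsub haS hh'
                    exact this.1 hcA
                  exact Or.inl hd
                · have : d = a ∧ c = b := by
                    rw [heab] at hh'
                    exact ⟨congrArg Prod.fst hh', congrArg Prod.snd hh'⟩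
                  rw [this.1]; exact Or.inl haA
                · have hd : d ∈ A := by
                    have := reach_no_cross hsub haS hh'
                    exact this.2 hcA
                  exact Or.inl hd
              · rcases hrel with h' | h' <;> rcases Finset.mem_insert.1 h' with hh' | hh'
                · have : c = a := by rw [heab] at hh'; exact congrArg Prod.fst hh'
                  exact absurd (this ▸ haA) hcA
                · have hd : d ∉ A := fun hc => hcA ((reach_no_cross hsub haS hh').2 hc)
                  refine Or.inr ⟨hd, Relation.ReflTransGen.tail hbc (Or.inl ?_)⟩
                  exact Finset.mem_filter.2 ⟨hh', hcA⟩
                · have : d = a := by rw [heab] at hh'; exact congrArg Prod.fst hh'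
                  rw [this]; exact Or.inl haA
                · have hd : d ∉ A := fun hc => hcA ((reach_no_cross hsub haS hh').1 hc)
                  refine Or.inr ⟨hd, Relation.ReflTransGen.tail hbc (Or.inr ?_)⟩
                  exact Finset.mem_filter.2 ⟨hh', hd⟩
          rcases split x hpath with hc | hc
          · exact absurd hc hxA
          · exact hc.2
  · -- backward membership
    rintro ⟨A, h₁, h₂⟩ hx
    rcases Finset.mem_sigma.1 hx with ⟨hA, hprod⟩
    rcases Finset.mem_filter.1 hA with ⟨hA1, haA⟩
    have hAeb : A ⊆ S.erase b := Finset.mem_powerset.1 hA1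
    have hAS : A ⊆ S := hAeb.trans (Finset.erase_subset _ _)
    have hbA : b ∉ A := fun hc => (Finset.mem_erase.1 (hAeb hc)).1 rfl
    rcases Finset.mem_product.1 hprod with ⟨hh₁, hh₂⟩
    rcases mem_graphsOn.1 hh₁ with ⟨hs1, hc1⟩
    rcases mem_graphsOn.1 hh₂ with ⟨hs2, hc2⟩
    refine Finset.mem_filter.2 ⟨Finset.mem_filter.2 ⟨Finset.mem_powerset.2 ?_, ?_, ?_⟩, ?_⟩
    · exact Finset.union_subset (hs1.trans (pr_mono hAS))
        (hs2.trans (pr_mono (Finset.sdiff_subset)))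
    · intro hce
      rcases Finset.mem_union.1 hce with hc | hc
      · exact hbA (mem_pr.1 (hs1 hc)).2.1
      · exact (Finset.mem_sdiff.1 (mem_pr.1 (hs2 hc)).1).2 haA
    · -- connectivity of insert e (h₁ ∪ h₂) via glue
      exact connOn_glue hAS haA (Finset.mem_sdiff.2 ⟨hbS, hbA⟩) hs1 hs2 hc1 hc2
        (Or.inl heab)
    · -- disconnected: the cut A is not crossed
      intro hcon
      obtain ⟨p, hp, hxp⟩ := hcon A hAS ⟨a, haA⟩ ⟨b, Finset.mem_sdiff.2 ⟨hbS, hbA⟩⟩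
      rcases Finset.mem_union.1 hp with hc | hc
      · rcases mem_pr.1 (hs1 hc) with ⟨u1, u2, _⟩
        rcases hxp with ⟨_, v2⟩ | ⟨_, v2⟩ <;> [exact v2 u2; exact v2 u1]
      · rcases mem_pr.1 (hs2 hc) with ⟨u1, u2, _⟩
        rcases hxp with ⟨v1, _⟩ | ⟨v1, _⟩
        · exact (Finset.mem_sdiff.1 u1).2 v1
        · exact (Finset.mem_sdiff.1 u2).2 v1
  · -- left inverse
    intro h hh
    exact Finset.filter_union_filter_not_eq _ h
  · -- right inverse
    rintro ⟨A, h₁, h₂⟩ hx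
    rcases Finset.mem_sigma.1 hx with ⟨hA, hprod⟩
    rcases Finset.mem_filter.1 hA with ⟨hA1, haA⟩
    have hAeb : A ⊆ S.erase b := Finset.mem_powerset.1 hA1
    have hAS : A ⊆ S := hAeb.trans (Finset.erase_subset _ _)
    rcases Finset.mem_product.1 hprod with ⟨hh₁, hh₂⟩
    rcases mem_graphsOn.1 hh₁ with ⟨hs1, hc1⟩
    rcases mem_graphsOn.1 hh₂ with ⟨hs2, hc2⟩
    have hreach : reachS S (h₁ ∪ h₂) a = A := reach_union hAS hs1 hs2 haA hc1
    have hf1 : (h₁ ∪ h₂).filter (fun p => p.1 ∈ A) = h₁ := by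
      ext p
      simp only [Finset.mem_filter, Finset.mem_union]
      constructor
      · rintro ⟨hp | hp, hp1⟩
        · exact hp
        · exact absurd hp1 (Finset.mem_sdiff.1 (mem_pr.1 (hs2 hp)).1).2
      · intro hp; exact ⟨Or.inl hp, (mem_pr.1 (hs1 hp)).1⟩
    have hf2 : (h₁ ∪ h₂).filter (fun p => p.1 ∉ A) = h₂ := by
      ext p
      simp only [Finset.mem_filter, Finset.mem_union]
      constructor
      · rintro ⟨hp | hp, hp1⟩
        · exact absurd (mem_pr.1 (hs1 hp)).1 hp1
        · exact hp
      · intro hp; exact ⟨Or.inr hp, (Finset.mem_sdiff.1 (mem_pr.1 (hs2 hp)).1).2⟩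
    simp only [hreach, hf1, hf2]
  · -- term match
    intro h hh
    exact (Finset.prod_filter_mul_prod_filter_not h _ _).symm

/- ### the tree gluing inequality -/

lemma tree_glue {g : Fin n × Fin n → ℝ} {S : Finset (Fin n)} {e : Fin n × Fin n}
    (hg : ∀ p, 0 ≤ g p) (he : e ∈ pr S) (hge : g e = 1) :
    ∑ A ∈ (S.erase e.2).powerset.filter (fun A => e.1 ∈ A), TOn g A * TOn g (S \ A) ≤
      TOn g S := by
  obtain ⟨haS, hbS, hab⟩ := mem_pr.1 he
  set a := e.1
  set b := e.2
  have heab : e = (a, b) := rfl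
  have lhs : ∑ A ∈ (S.erase b).powerset.filter (fun A => a ∈ A), TOn g A * TOn g (S \ A) =
      ∑ x ∈ ((S.erase b).powerset.filter (fun A => a ∈ A)).sigma
        (fun A => treesOn A ×ˢ treesOn (S \ A)),
        (∏ p ∈ x.2.1, g p) * (∏ p ∈ x.2.2, g p) := by
    rw [Finset.sum_sigma]
    refine Finset.sum_congr rfl fun A hA => ?_
    rw [TOn, TOn, Finset.sum_mul_sum, Finset.sum_product]
  rw [lhs]
  -- facts about elements of the sigma set
  have fact : ∀ A τ₁ τ₂, (⟨A, (τ₁, τ₂)⟩ : Σ _ : Finset (Fin n),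
        Finset (Fin n × Fin n) × Finset (Fin n × Fin n)) ∈
        ((S.erase b).powerset.filter (fun A => a ∈ A)).sigma
        (fun A => treesOn A ×ˢ treesOn (S \ A)) →
      (τ₁ ⊆ pr A ∧ τ₂ ⊆ pr (S \ A) ∧ a ∈ A ∧ A ⊆ S ∧ b ∉ A ∧
        connOn A τ₁ ∧ connOn (S \ A) τ₂ ∧
        τ₁.card + 1 = A.card ∧ τ₂.card + 1 = (S \ A).card) := by
    intro A τ₁ τ₂ hx
    rcases Finset.mem_sigma.1 hx with ⟨hA, hprod⟩
    rcases Finset.mem_filter.1 hA with ⟨hA1, haA⟩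
    have hAeb : A ⊆ S.erase b := Finset.mem_powerset.1 hA1
    have hAS : A ⊆ S := hAeb.trans (Finset.erase_subset _ _)
    have hbA : b ∉ A := fun hc => (Finset.mem_erase.1 (hAeb hc)).1 rfl
    rcases Finset.mem_product.1 hprod with ⟨hh₁, hh₂⟩
    rcases mem_treesOn.1 hh₁ with ⟨hs1, hc1, hcard1⟩
    rcases mem_treesOn.1 hh₂ with ⟨hs2, hc2, hcard2⟩
    exact ⟨hs1, hs2, haA, hAS, hbA, hc1, hc2, hcard1, hcard2⟩
  -- the gluing map
  set Φ : (Σ _ : Finset (Fin n), Finset (Fin n × Fin n) × Finset (Fin n × Fin n)) →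
      Finset (Fin n × Fin n) := fun x => insert e (x.2.1 ∪ x.2.2) with hΦ
  have hmem : ∀ x ∈ ((S.erase b).powerset.filter (fun A => a ∈ A)).sigma
      (fun A => treesOn A ×ˢ treesOn (S \ A)), Φ x ∈ treesOn S := by
    rintro ⟨A, τ₁, τ₂⟩ hx
    obtain ⟨hs1, hs2, haA, hAS, hbA, hc1, hc2, hcard1, hcard2⟩ := fact _ _ _ hx
    have henotin : e ∉ τ₁ ∪ τ₂ := by
      intro hce
      rcases Finset.mem_union.1 hce with hc | hc
      · exact hbA (mem_pr.1 (hs1 hc)).2.1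
      · exact (Finset.mem_sdiff.1 (mem_pr.1 (hs2 hc)).1).2 haA
    have hdisj : Disjoint τ₁ τ₂ := by
      refine Finset.disjoint_left.2 (fun p hp1 hp2 => ?_)
      exact (Finset.mem_sdiff.1 (mem_pr.1 (hs2 hp2)).1).2 (mem_pr.1 (hs1 hp1)).1
    refine mem_treesOn.2 ⟨?_, ?_, ?_⟩
    · refine Finset.insert_subset he (Finset.union_subset (hs1.trans (pr_mono hAS))
        (hs2.trans (pr_mono Finset.sdiff_subset)))
    · exact connOn_glue hAS haA (Finset.mem_sdiff.2 ⟨hbS, hbA⟩) hs1 hs2 hc1 hc2 (Or.inl heab)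
    · rw [Finset.card_insert_of_notMem henotin, Finset.card_union_of_disjoint hdisj]
      have := Finset.card_sdiff_add_card_eq_card hAS
      omega
  -- injectivity
  have hinj : Set.InjOn Φ (((S.erase b).powerset.filter (fun A => a ∈ A)).sigma
      (fun A => treesOn A ×ˢ treesOn (S \ A)) : Finset _) := by
    rintro ⟨A, τ₁, τ₂⟩ hx ⟨A', τ₁', τ₂'⟩ hx' heq
    obtain ⟨hs1, hs2, haA, hAS, hbA, hc1, hc2, _, _⟩ := fact _ _ _ (by exact_mod_cast hx)
    obtain ⟨hs1', hs2', haA', hAS', hbA', hc1', hc2', _, _⟩ := fact _ _ _ (by exact_mod_cast hx')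
    have henotin : e ∉ τ₁ ∪ τ₂ := by
      intro hce
      rcases Finset.mem_union.1 hce with hc | hc
      · exact hbA (mem_pr.1 (hs1 hc)).2.1
      · exact (Finset.mem_sdiff.1 (mem_pr.1 (hs2 hc)).1).2 haA
    have henotin' : e ∉ τ₁' ∪ τ₂' := by
      intro hce
      rcases Finset.mem_union.1 hce with hc | hc
      · exact hbA' (mem_pr.1 (hs1' hc)).2.1
      · exact (Finset.mem_sdiff.1 (mem_pr.1 (hs2' hc)).1).2 haA'
    have hu : τ₁ ∪ τ₂ = τ₁' ∪ τ₂' := by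
      have h1 : (Φ ⟨A, τ₁, τ₂⟩).erase e = τ₁ ∪ τ₂ := Finset.erase_insert henotin
      have h2 : (Φ ⟨A', τ₁', τ₂'⟩).erase e = τ₁' ∪ τ₂' := Finset.erase_insert henotin'
      rw [← h1, ← h2, heq]
    have hA : A = A' := by
      rw [← reach_union hAS hs1 hs2 haA hc1, ← reach_union hAS' hs1' hs2' haA' hc1', hu]
    subst hA
    have ht1 : τ₁ = τ₁' := by
      ext p
      constructor
      · intro hp
        have : p ∈ τ₁' ∪ τ₂' := hu ▸ Finset.mem_union_left _ hp
        rcases Finset.mem_union.1 this with hc | hc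
        · exact hc
        · exact absurd (mem_pr.1 (hs1 hp)).1 (Finset.mem_sdiff.1 (mem_pr.1 (hs2' hc)).1).2
      · intro hp
        have : p ∈ τ₁ ∪ τ₂ := hu ▸ Finset.mem_union_left _ hp
        rcases Finset.mem_union.1 this with hc | hc
        · exact hc
        · exact absurd (mem_pr.1 (hs1' hp)).1 (Finset.mem_sdiff.1 (mem_pr.1 (hs2 hc)).1).2
    have ht2 : τ₂ = τ₂' := by
      ext p
      constructor
      · intro hp
        have : p ∈ τ₁' ∪ τ₂' := hu ▸ Finset.mem_union_right _ hp
        rcases Finset.mem_union.1 this with hc | hc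
        · exact absurd (mem_pr.1 (hs1' hc)).1 (Finset.mem_sdiff.1 (mem_pr.1 (hs2 hp)).1).2
        · exact hc
      · intro hp
        have : p ∈ τ₁ ∪ τ₂ := hu ▸ Finset.mem_union_right _ hp
        rcases Finset.mem_union.1 this with hc | hc
        · exact absurd (mem_pr.1 (hs1 hc)).1 (Finset.mem_sdiff.1 (mem_pr.1 (hs2' hp)).1).2
        · exact hc
    simp [ht1, ht2]
  -- term bound
  calc ∑ x ∈ ((S.erase b).powerset.filter (fun A => a ∈ A)).sigma
        (fun A => treesOn A ×ˢ treesOn (S \ A)),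
        (∏ p ∈ x.2.1, g p) * (∏ p ∈ x.2.2, g p)
      = ∑ x ∈ ((S.erase b).powerset.filter (fun A => a ∈ A)).sigma
        (fun A => treesOn A ×ˢ treesOn (S \ A)), ∏ p ∈ Φ x, g p := by
        refine Finset.sum_congr rfl ?_
        rintro ⟨A, τ₁, τ₂⟩ hx
        obtain ⟨hs1, hs2, haA, hAS, hbA, _, _, _, _⟩ := fact _ _ _ hx
        have henotin : e ∉ τ₁ ∪ τ₂ := by
          intro hce
          rcases Finset.mem_union.1 hce with hc | hc
          · exact hbA (mem_pr.1 (hs1 hc)).2.1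
          · exact (Finset.mem_sdiff.1 (mem_pr.1 (hs2 hc)).1).2 haA
        have hdisj : Disjoint τ₁ τ₂ := by
          refine Finset.disjoint_left.2 (fun p hp1 hp2 => ?_)
          exact (Finset.mem_sdiff.1 (mem_pr.1 (hs2 hp2)).1).2 (mem_pr.1 (hs1 hp1)).1
        rw [hΦ]
        rw [Finset.prod_insert henotin, Finset.prod_union hdisj, hge, one_mul]
    _ = ∑ E ∈ (((S.erase b).powerset.filter (fun A => a ∈ A)).sigma
        (fun A => treesOn A ×ˢ treesOn (S \ A))).image Φ, ∏ p ∈ E, g p := by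
        rw [Finset.sum_image (fun x hx y hy => hinj hx hy)]
    _ ≤ TOn g S := by
        refine Finset.sum_le_sum_of_subset_of_nonneg ?_ (fun E _ _ => Finset.prod_nonneg
          (fun p _ => hg p))
        intro E hE
        rcases Finset.mem_image.1 hE with ⟨x, hx, hxE⟩
        exact hxE ▸ hmem x hx

/- ### the interpolation recursion (analysis) -/

lemma mulbd_one (C : Finset (Fin n)) (u : Fin n × Fin n → ℝ) : mulbd C 1 u = u := by
  funext p; simp [mulbd]

lemma PsiSet_self (S : Finset (Fin n)) : PsiSet S S = {∅} := by
  ext E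
  simp only [PsiSet, Finset.mem_filter, Finset.mem_powerset, Finset.sdiff_self,
    Finset.subset_empty, Finset.mem_singleton]
  constructor
  · rintro ⟨h, _⟩; exact h
  · rintro rfl; exact ⟨rfl, connQ_self S ∅⟩

lemma Psi_self (u : Fin n × Fin n → ℝ) (S : Finset (Fin n)) : Psi u S S = 1 := by
  rw [Psi, PsiSet_self]; simp

lemma Compl_self (S : Finset (Fin n)) : Compl S S = {∅} := by
  ext F
  simp only [Compl, Finset.mem_filter, Finset.mem_powerset, Finset.sdiff_self,
    Finset.subset_empty, Finset.mem_singleton]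
  constructor
  · rintro ⟨h, _⟩; exact h
  · rintro rfl; exact ⟨rfl, connQ_self S ∅, by simp⟩

lemma MM_self (u : Fin n × Fin n → ℝ) (S : Finset (Fin n)) : MM u S S = 1 := by
  rw [MM, Compl_self]; simp

lemma Psi_zero {S C : Finset (Fin n)} (u : Fin n × Fin n → ℝ) (hCS : C ⊆ S)
    (hC : C.Nonempty) (hSC : (S \ C).Nonempty) : Psi (mulbd C 0 u) S C = 0 := by
  rw [Psi]
  refine Finset.sum_eq_zero fun E hE => ?_
  rcases Finset.mem_filter.1 hE with ⟨hE1, hE2⟩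
  obtain ⟨q, hq, hxq⟩ := connQ_exists_bd hE2 hCS hC hSC
  refine Finset.prod_eq_zero hq ?_
  simp [mulbd, if_pos hxq, mayer_zero]

section L1

variable {S C : Finset (Fin n)} (u : Fin n × Fin n → ℝ)

private lemma hasDerivAt_phi (p : Fin n × Fin n) (t : ℝ) :
    HasDerivAt (fun t => mayer (mulbd C t u p))
      (if Xp C p then Real.exp (-(t * u p)) * (-(u p)) else 0) t := by
  by_cases h : Xp C p
  · simp only [mulbd, if_pos h, mayer]
    have h1 : HasDerivAt (fun t : ℝ => t * u p) (u p) t := hasDerivAt_mul_const _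
    exact (h1.neg.exp).sub_const 1
  · simp only [mulbd, if_neg h]
    exact hasDerivAt_const _ _

private lemma cont_phi (p : Fin n × Fin n) :
    Continuous (fun t => mayer (mulbd C t u p)) := by
  by_cases h : Xp C p <;> simp only [mulbd, if_pos, if_neg, h, if_true, if_false, mayer]
  · exact ((continuous_id.mul continuous_const).neg.rexp).sub continuous_const
  · exact continuous_const

private lemma cont_psi (C₀ : Finset (Fin n)) :
    Continuous (fun t => Psi (mulbd C t u) S C₀) := by
  unfold Psi
  refine continuous_finset_sum _ fun E _ => continuous_finset_prod _ fun p _ => cont_phi u p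

lemma L1 (hCS : C ⊆ S) (hC : C.Nonempty) (hSC : (S \ C).Nonempty) :
    Psi u S C = ∑ q ∈ bd C S, ∫ t in (0:ℝ)..1,
      Real.exp (-(t * ∑ p ∈ Cb C (out C q), u p)) * (-(u q)) *
        Psi (mulbd C t u) S (insert (out C q) C) := by
  classical
  set φ : (Fin n × Fin n) → ℝ → ℝ := fun p t => mayer (mulbd C t u p) with hφ
  set D : ℝ → ℝ := fun t => ∑ E ∈ PsiSet S C, ∑ p ∈ E,
      (∏ q ∈ E.erase p, φ q t) * (if Xp C p then Real.exp (-(t * u p)) * (-(u p)) else 0)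
    with hDdef
  -- the derivative
  have hderiv : ∀ t : ℝ, HasDerivAt (fun t => Psi (mulbd C t u) S C) (D t) t := by
    intro t
    unfold Psi
    refine HasDerivAt.fun_sum fun E _ => ?_
    have := HasDerivAt.fun_finsetProd (u := E) (f := fun p t => φ p t)
      (f' := fun p => if Xp C p then Real.exp (-(t * u p)) * (-(u p)) else 0)
      (x := t) (fun p _ => hasDerivAt_phi u p t)
    simpa only [smul_eq_mul] using this
  -- rewrite D in the organized form
  have hD : ∀ t : ℝ, D t = ∑ q ∈ bd C S,
      Real.exp (-(t * ∑ p ∈ Cb C (out C q), u p)) * (-(u q)) *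
        Psi (mulbd C t u) S (insert (out C q) C) := by
    intro t
    simp only [hDdef]
    -- restrict the inner sum to crossing pairs
    have e1 : ∀ E ∈ PsiSet S C, (∑ p ∈ E,
        (∏ q ∈ E.erase p, φ q t) * (if Xp C p then Real.exp (-(t * u p)) * (-(u p)) else 0)) =
        ∑ p ∈ E.filter (fun p => Xp C p),
        (∏ q ∈ E.erase p, φ q t) * (Real.exp (-(t * u p)) * (-(u p))) := by
      intro E _
      have hvan : ∀ x ∈ E, (∏ q ∈ E.erase x, φ q t) *
          (if Xp C x then Real.exp (-(t * u x)) * (-(u x)) else 0) ≠ 0 → Xp C x := by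
        intro x _ hne
        by_contra hxp
        rw [if_neg hxp, mul_zero] at hne
        exact hne rfl
      rw [← Finset.sum_filter_of_ne hvan]
      refine Finset.sum_congr rfl fun p hp => ?_
      rw [if_pos (Finset.mem_filter.1 hp).2]
    rw [Finset.sum_congr rfl e1]
    -- swap the двух sums
    rw [Finset.sum_comm' (s' := fun p => (PsiSet S C).filter (fun E => p ∈ E)) (t' := bd C S)
      (by
        intro E p
        constructor
        · rintro ⟨hE, hp⟩
          rcases Finset.mem_filter.1 hp with ⟨hpE, hxp⟩
          have hsub : E ⊆ pr S \ pr C :=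
            Finset.mem_powerset.1 (Finset.mem_filter.1 hE).1
          refine ⟨Finset.mem_filter.2 ⟨hE, hpE⟩,
            mem_bd.2 ⟨(Finset.mem_sdiff.1 (hsub hpE)).1, hxp⟩⟩
        · rintro ⟨hE, hp⟩
          rcases Finset.mem_filter.1 hE with ⟨hE1, hpE⟩
          exact ⟨hE1, Finset.mem_filter.2 ⟨hpE, (mem_bd.1 hp).2⟩⟩)]
    -- per boundary pair: the resummation identity
    refine Finset.sum_congr rfl fun q hq => ?_
    rcases mem_bd.1 hq with ⟨hqS, hxq⟩
    set b := out C q with hb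
    have hbC : b ∉ C := out_not_mem hxq
    have hbS : b ∈ S := out_mem_S hqS
    have hqCb : q ∈ Cb C b := bd_mem_Cb hq
    have hC'S : insert b C ⊆ S := Finset.insert_subset hbS hCS
    have hqnotprC : q ∉ pr C := fun hc => not_xp_of_pr hc hxq
    have hqprC' : q ∈ pr (insert b C) := (Finset.mem_sdiff.1 hqCb).1
    set N := (Cb C b).erase q with hN
    -- the inner sum over graphs containing q
    have key : ∑ E ∈ (PsiSet S C).filter (fun E => q ∈ E), ∏ r ∈ E.erase q, φ r t =
        (∑ h ∈ N.powerset, ∏ r ∈ h, φ r t) *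
        (∑ g ∈ PsiSet S (insert b C), ∏ r ∈ g, φ r t) := by
      rw [Finset.sum_mul_sum, ← Finset.sum_product']
      refine Finset.sum_nbij' (fun E => (E ∩ N, E \ pr (insert b C)))
        (fun x => insert q (x.1 ∪ x.2)) ?_ ?_ ?_ ?_ ?_
      · intro E hE
        rcases Finset.mem_filter.1 hE with ⟨hE1, hqE⟩
        rcases Finset.mem_filter.1 hE1 with ⟨hEsub', hEconn⟩
        have hEsub : E ⊆ pr S \ pr C := Finset.mem_powerset.1 hEsub'
        refine Finset.mem_product.2 ⟨Finset.mem_powerset.2 Finset.inter_subset_right, ?_⟩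
        refine Finset.mem_filter.2 ⟨Finset.mem_powerset.2 ?_, ?_⟩
        · intro r hr
          rcases Finset.mem_sdiff.1 hr with ⟨hr1, hr2⟩
          exact Finset.mem_sdiff.2 ⟨(Finset.mem_sdiff.1 (hEsub hr1)).1, hr2⟩
        · -- connQ S C' (E \ pr C')
          have hgrow := connQ_grow hqE (out_ends hxq).1 (out_ends hxq).2 hEconn
          intro A hA h1 h2
          rcases hgrow A hA h1 h2 with hleft | ⟨p, hp, hxp⟩
          · exact Or.inl hleft
          · by_cases hpC' : p ∈ pr (insert b C)
            · rcases mem_pr.1 hpC' with ⟨hp1, hp2, _⟩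
              rcases hxp with ⟨v1, v2⟩ | ⟨v1, v2⟩
              · exact Or.inl ⟨⟨p.1, Finset.mem_inter.2 ⟨hp1, v1⟩⟩,
                  ⟨p.2, Finset.mem_sdiff.2 ⟨hp2, v2⟩⟩⟩
              · exact Or.inl ⟨⟨p.2, Finset.mem_inter.2 ⟨hp2, v1⟩⟩,
                  ⟨p.1, Finset.mem_sdiff.2 ⟨hp1, v2⟩⟩⟩
            · exact Or.inr ⟨p, Finset.mem_sdiff.2 ⟨Finset.mem_of_mem_erase hp, hpC'⟩, hxp⟩
      · rintro ⟨h, g⟩ hx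
        rcases Finset.mem_product.1 hx with ⟨hh, hg⟩
        have hhN : h ⊆ N := Finset.mem_powerset.1 hh
        rcases Finset.mem_filter.1 hg with ⟨hg1, hgconn⟩
        have hgsub : g ⊆ pr S \ pr (insert b C) := Finset.mem_powerset.1 hg1
        refine Finset.mem_filter.2 ⟨Finset.mem_filter.2 ⟨Finset.mem_powerset.2 ?_, ?_⟩,
          Finset.mem_insert_self _ _⟩
        · refine Finset.insert_subset (Finset.mem_sdiff.2 ⟨hqS, hqnotprC⟩)
            (Finset.union_subset ?_ ?_)
          · intro r hr
            have hrCb : r ∈ Cb C b := Finset.mem_of_mem_erase (hhN hr)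
            rcases Finset.mem_sdiff.1 hrCb with ⟨hr1, hr2⟩
            exact Finset.mem_sdiff.2 ⟨pr_mono hC'S hr1, hr2⟩
          · intro r hr
            rcases Finset.mem_sdiff.1 (hgsub hr) with ⟨hr1, hr2⟩
            exact Finset.mem_sdiff.2 ⟨hr1, fun hc => hr2 (pr_mono (Finset.subset_insert _ _) hc)⟩
        · -- connQ S C (insert q (h ∪ g))
          have h1 : connQ S C (insert q g) := connQ_shrink (out_ends hxq).1 (out_ends hxq).2
            hxq hgconn
          refine connQ_of_subset h1 ?_
          intro r hr
          rcases Finset.mem_insert.1 hr with rfl | hr'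
          · exact Finset.mem_insert_self _ _
          · exact Finset.mem_insert_of_mem (Finset.mem_union_right _ hr')
      · -- left inverse
        intro E hE
        rcases Finset.mem_filter.1 hE with ⟨hE1, hqE⟩
        have hEsub : E ⊆ pr S \ pr C := Finset.mem_powerset.1 (Finset.mem_filter.1 hE1).1
        ext r
        simp only [Finset.mem_insert, Finset.mem_union, Finset.mem_inter, Finset.mem_sdiff]
        constructor
        · rintro (rfl | ⟨hr, _⟩ | ⟨hr, _⟩) <;> [exact hqE; exact hr; exact hr]
        · intro hr
          by_cases hrq : r = q
          · exact Or.inl hrq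
          · by_cases hrC' : r ∈ pr (insert b C)
            · refine Or.inr (Or.inl ⟨hr, ?_⟩)
              rw [hN]
              refine Finset.mem_erase.2 ⟨hrq, ?_⟩
              exact Finset.mem_sdiff.2 ⟨hrC', (Finset.mem_sdiff.1 (hEsub hr)).2⟩
            · exact Or.inr (Or.inr ⟨hr, hrC'⟩)
      · -- right inverse
        rintro ⟨h, g⟩ hx
        rcases Finset.mem_product.1 hx with ⟨hh, hg⟩
        have hhN : h ⊆ N := Finset.mem_powerset.1 hh
        have hgsub : g ⊆ pr S \ pr (insert b C) :=
          Finset.mem_powerset.1 (Finset.mem_filter.1 hg).1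
        have hqh : q ∉ h := fun hc => Finset.notMem_erase _ _ (hhN hc)
        have hqg : q ∉ g := fun hc => (Finset.mem_sdiff.1 (hgsub hc)).2 hqprC'
        have e1 : (insert q (h ∪ g)) ∩ N = h := by
          ext r
          simp only [Finset.mem_inter, Finset.mem_insert, Finset.mem_union]
          constructor
          · rintro ⟨rfl | hr | hr, hrN⟩
            · exact absurd hrN (Finset.notMem_erase _ _)
            · exact hr
            · exfalso
              have := (Finset.mem_sdiff.1 (Finset.mem_of_mem_erase hrN)).1
              exact (Finset.mem_sdiff.1 (hgsub hr)).2 this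
          · intro hr; exact ⟨Or.inr (Or.inl hr), hhN hr⟩
        have e2 : (insert q (h ∪ g)) \ pr (insert b C) = g := by
          ext r
          simp only [Finset.mem_sdiff, Finset.mem_insert, Finset.mem_union]
          constructor
          · rintro ⟨rfl | hr | hr, hrC'⟩
            · exact absurd hqprC' hrC'
            · exact absurd (Finset.mem_sdiff.1 (Finset.mem_of_mem_erase (hhN hr))).1 hrC'
            · exact hr
          · intro hr
            exact ⟨Or.inr (Or.inr hr), (Finset.mem_sdiff.1 (hgsub hr)).2⟩
        show (insert q (h ∪ g) ∩ N, insert q (h ∪ g) \ pr (insert b C)) = (h, g)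
        rw [e1, e2]
      · -- term match
        intro E hE
        rcases Finset.mem_filter.1 hE with ⟨hE1, hqE⟩
        have hEsub : E ⊆ pr S \ pr C := Finset.mem_powerset.1 (Finset.mem_filter.1 hE1).1
        have hsplit : E.erase q = (E ∩ N) ∪ (E \ pr (insert b C)) := by
          ext r
          simp only [Finset.mem_erase, Finset.mem_union, Finset.mem_inter, Finset.mem_sdiff]
          constructor
          · rintro ⟨hrq, hr⟩
            by_cases hrC' : r ∈ pr (insert b C)
            · refine Or.inl ⟨hr, Finset.mem_erase.2 ⟨hrq, Finset.mem_sdiff.2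
                ⟨hrC', (Finset.mem_sdiff.1 (hEsub hr)).2⟩⟩⟩
            · exact Or.inr ⟨hr, hrC'⟩
          · rintro (⟨hr, hrN⟩ | ⟨hr, hrC'⟩)
            · exact ⟨(Finset.mem_erase.1 hrN).1, hr⟩
            · exact ⟨fun hc => hrC' (hc ▸ hqprC'), hr⟩
        have hdisj : Disjoint (E ∩ N) (E \ pr (insert b C)) := by
          refine Finset.disjoint_left.2 fun r hr1 hr2 => ?_
          have := (Finset.mem_sdiff.1 (Finset.mem_of_mem_erase
            (Finset.mem_inter.1 hr1).2)).1
          exact (Finset.mem_sdiff.1 hr2).2 this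
        rw [hsplit, Finset.prod_union hdisj]
    rw [← Finset.sum_mul, key]
    -- turn the powerset sum into the exponential
    have hsum : ∑ h ∈ N.powerset, ∏ r ∈ h, φ r t = Real.exp (-(t * ∑ p ∈ N, u p)) := by
      have := Finset.prod_add (fun r => φ r t) (fun _ => (1:ℝ)) N
      simp only [Finset.prod_const_one, mul_one] at this
      have h2 : ∏ r ∈ N, (φ r t + 1) = Real.exp (-(t * ∑ p ∈ N, u p)) := by
        rw [Finset.mul_sum, ← Finset.sum_neg_distrib, Real.exp_sum]
        refine Finset.prod_congr rfl fun r hr => ?_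
        have hxr : Xp C r := Xp_of_Cb hbC (Finset.mem_of_mem_erase (hN ▸ hr))
        rw [hφ]
        simp only [mulbd, if_pos hxr]
        rw [add_comm, one_add_mayer]
      rw [← h2, ← this]
    rw [hsum]
    -- combine the exponentials
    have hCbsum : u q + ∑ p ∈ N, u p = ∑ p ∈ Cb C b, u p := by
      rw [hN]; exact Finset.add_sum_erase _ _ hqCb
    have hcomb : Real.exp (-(t * ∑ p ∈ N, u p)) *
        (∑ g ∈ PsiSet S (insert b C), ∏ r ∈ g, φ r t) *
        (Real.exp (-(t * u q)) * (-(u q))) =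
        Real.exp (-(t * ∑ p ∈ Cb C b, u p)) * (-(u q)) *
        (∑ g ∈ PsiSet S (insert b C), ∏ r ∈ g, φ r t) := by
      rw [← hCbsum]
      rw [mul_add, neg_add, Real.exp_add]
      ring
    rw [hcomb]
    rfl
  -- fundamental theorem of calculus
  have hcont : ∀ q ∈ bd C S, Continuous (fun t =>
      Real.exp (-(t * ∑ p ∈ Cb C (out C q), u p)) * (-(u q)) *
        Psi (mulbd C t u) S (insert (out C q) C)) := by
    intro q _
    exact (((continuous_id.mul continuous_const).neg.rexp).mul continuous_const).mul
      (cont_psi u _)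
  have hDcont : Continuous D := by
    have : D = fun t => ∑ q ∈ bd C S,
        Real.exp (-(t * ∑ p ∈ Cb C (out C q), u p)) * (-(u q)) *
        Psi (mulbd C t u) S (insert (out C q) C) := funext hD
    rw [this]
    exact continuous_finset_sum _ fun q hq => hcont q hq
  have hftc := intervalIntegral.integral_eq_sub_of_hasDerivAt
    (f := fun t => Psi (mulbd C t u) S C) (f' := D)
    (a := (0:ℝ)) (b := 1) (fun t _ => hderiv t)
    (hDcont.intervalIntegrable 0 1)
  have hftc' : ∫ y in (0:ℝ)..1, D y =
      Psi (mulbd C 1 u) S C - Psi (mulbd C 0 u) S C := hftc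
  rw [mulbd_one, Psi_zero u hCS hC hSC, sub_zero] at hftc'
  rw [← hftc']
  rw [intervalIntegral.integral_congr (g := fun t => ∑ q ∈ bd C S,
      Real.exp (-(t * ∑ p ∈ Cb C (out C q), u p)) * (-(u q)) *
        Psi (mulbd C t u) S (insert (out C q) C)) (fun t _ => hD t)]
  rw [intervalIntegral.integral_finset_sum (fun q hq => (hcont q hq).intervalIntegrable 0 1)]

end L1

/- ### stability along admissible states -/

lemma stab_adm {S : Finset (Fin n)} {v : Fin n × Fin n → ℝ} {bf : Fin n → ℝ}
    (hstabv : ∀ T ⊆ S, -∑ i ∈ T, bf i ≤ ∑ p ∈ pr T, v p)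
    {C : Finset (Fin n)} {u : Fin n × Fin n → ℝ} (h : Adm S v C u) :
    ∀ f : Fin n → ℕ, (∀ c ∈ C, ∀ c' ∈ C, f c = f c') →
      -∑ i ∈ S, bf i ≤ ∑ p ∈ (pr S).filter (fun p => f p.1 = f p.2), u p := by
  induction h with
  | base r hr =>
    intro f _
    -- fiber decomposition
    have hdisj : ∀ ℓ ∈ S.image f, ∀ ℓ' ∈ S.image f, ℓ ≠ ℓ' →
        Disjoint (pr (S.filter (fun x => f x = ℓ))) (pr (S.filter (fun x => f x = ℓ'))) := by
      intro ℓ _ ℓ' _ hne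
      refine Finset.disjoint_left.2 fun p hp hp' => ?_
      have h1 := (Finset.mem_filter.1 (mem_pr.1 hp).1).2
      have h2 := (Finset.mem_filter.1 (mem_pr.1 hp').1).2
      exact hne (h1 ▸ h2 ▸ rfl)
    have hdisj' : ∀ ℓ ∈ S.image f, ∀ ℓ' ∈ S.image f, ℓ ≠ ℓ' →
        Disjoint (S.filter (fun x => f x = ℓ)) (S.filter (fun x => f x = ℓ')) := by
      intro ℓ _ ℓ' _ hne
      refine Finset.disjoint_left.2 fun x hx hx' => ?_
      exact hne ((Finset.mem_filter.1 hx).2 ▸ (Finset.mem_filter.1 hx').2 ▸ rfl)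
    have hP : (pr S).filter (fun p => f p.1 = f p.2) =
        (S.image f).biUnion (fun ℓ => pr (S.filter (fun x => f x = ℓ))) := by
      ext p
      simp only [Finset.mem_filter, Finset.mem_biUnion, Finset.mem_image, mem_pr]
      constructor
      · rintro ⟨⟨h1, h2, h3⟩, hfe⟩
        exact ⟨f p.1, ⟨p.1, h1, rfl⟩, ⟨h1, rfl⟩, ⟨h2, hfe.symm⟩, h3⟩
      · rintro ⟨ℓ, _, ⟨h1, e1⟩, ⟨h2, e2⟩, h3⟩
        exact ⟨⟨h1, h2, h3⟩, e1.trans e2.symm⟩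
    have hS : S = (S.image f).biUnion (fun ℓ => S.filter (fun x => f x = ℓ)) := by
      ext x
      simp only [Finset.mem_biUnion, Finset.mem_image, Finset.mem_filter]
      constructor
      · intro hx; exact ⟨f x, ⟨x, hx, rfl⟩, hx, rfl⟩
      · rintro ⟨ℓ, _, hx, _⟩; exact hx
    rw [hP, Finset.sum_biUnion (fun ℓ hℓ ℓ' hℓ' hne => hdisj ℓ hℓ ℓ' hℓ' hne)]
    have hbS : ∑ i ∈ S, bf i = ∑ ℓ ∈ S.image f, ∑ i ∈ S.filter (fun x => f x = ℓ), bf i := by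
      conv_lhs => rw [hS]
      rw [Finset.sum_biUnion (fun ℓ hℓ ℓ' hℓ' hne => hdisj' ℓ hℓ ℓ' hℓ' hne)]
    rw [hbS, ← Finset.sum_neg_distrib]
    refine Finset.sum_le_sum fun ℓ _ => ?_
    exact hstabv _ (Finset.filter_subset _ _)
  | @step C u hadm b hb hbC t ht0 ht1 ih =>
    intro f hfconst
    have hfC : ∀ c ∈ C, ∀ c' ∈ C, f c = f c' := fun c hc c' hc' =>
      hfconst c (Finset.mem_insert_of_mem hc) c' (Finset.mem_insert_of_mem hc')
    -- split the sum
    set P := (pr S).filter (fun p => f p.1 = f p.2) with hPdef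
    have hsplit : ∑ p ∈ P, mulbd C t u p =
        t * (∑ p ∈ P.filter (fun p => Xp C p), u p) +
        ∑ p ∈ P.filter (fun p => ¬ Xp C p), u p := by
      rw [← Finset.sum_filter_add_sum_filter_not P (fun p => Xp C p), Finset.mul_sum]
      congr 1
      · exact Finset.sum_congr rfl fun p hp => by
          simp [mulbd, if_pos (Finset.mem_filter.1 hp).2]
      · exact Finset.sum_congr rfl fun p hp => by
          simp [mulbd, if_neg (Finset.mem_filter.1 hp).2]
    rw [hsplit]
    set X := ∑ p ∈ P.filter (fun p => Xp C p), u p with hX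
    set Y := ∑ p ∈ P.filter (fun p => ¬ Xp C p), u p with hY
    -- endpoint t = 1
    have h1 : -∑ i ∈ S, bf i ≤ X + Y := by
      have := ih f hfC
      rwa [← Finset.sum_filter_add_sum_filter_not P (fun p => Xp C p)] at this
    -- endpoint t = 0
    have h0 : -∑ i ∈ S, bf i ≤ Y := by
      set M := S.sup f with hM
      set f' : Fin n → ℕ := fun x => if x ∈ C then M + 1 else f x with hf'
      have hf'C : ∀ c ∈ C, ∀ c' ∈ C, f' c = f' c' := by
        intro c hc c' hc'; simp [hf', if_pos hc, if_pos hc']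
      have hset : (pr S).filter (fun p => f' p.1 = f' p.2) =
          P.filter (fun p => ¬ Xp C p) := by
        rw [hPdef, Finset.filter_filter]
        refine Finset.filter_congr fun p hp => ?_
        rcases mem_pr.1 hp with ⟨hp1, hp2, _⟩
        by_cases c1 : p.1 ∈ C <;> by_cases c2 : p.2 ∈ C
        · simp only [hf', if_pos c1, if_pos c2, Xp]
          constructor
          · intro _; exact ⟨hfC _ c1 _ c2, by tauto⟩
          · intro _; trivial
        · have : f p.2 ≤ M := Finset.le_sup hp2
          simp only [hf', if_pos c1, if_neg c2, Xp]
          constructor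
          · intro he; omega
          · rintro ⟨_, hno⟩; exact absurd (Or.inl ⟨c1, c2⟩) hno
        · have : f p.1 ≤ M := Finset.le_sup hp1
          simp only [hf', if_neg c1, if_pos c2, Xp]
          constructor
          · intro he; omega
          · rintro ⟨_, hno⟩; exact absurd (Or.inr ⟨c2, c1⟩) hno
        · simp only [hf', if_neg c1, if_neg c2, Xp]
          constructor
          · intro he; exact ⟨he, by tauto⟩
          · rintro ⟨he, _⟩; exact he
      have := ih f' hf'C
      rwa [hset] at this
    nlinarith [h1, h0, ht0, ht1]

/- ### bookkeeping lemmas for the induction -/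

lemma AA_insert {C : Finset (Fin n)} {b : Fin n} (hbC : b ∉ C) (t : ℝ)
    (u : Fin n × Fin n → ℝ) :
    AA (mulbd C t u) (insert b C) = AA u C + t * ∑ p ∈ Cb C b, u p := by
  rw [AA, AA, pr_insert_eq, Finset.sum_union Cb_disj, Finset.mul_sum]
  congr 1
  · exact Finset.sum_congr rfl fun p hp => by
      simp [mulbd, if_neg (not_xp_of_pr hp)]
  · exact Finset.sum_congr rfl fun p hp => by
      simp [mulbd, if_pos (Xp_of_Cb hbC hp)]

lemma MM_mulbd {S C C' : Finset (Fin n)} {t : ℝ} (ht : 0 ≤ t) (u : Fin n × Fin n → ℝ) :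
    MM (mulbd C t u) S C' =
      ∑ F ∈ Compl S C', t ^ (F.filter fun p => Xp C p).card * ∏ p ∈ F, |u p| := by
  rw [MM]
  refine Finset.sum_congr rfl fun F _ => ?_
  rw [← Finset.prod_filter_mul_prod_filter_not F (fun p => Xp C p),
      ← Finset.prod_filter_mul_prod_filter_not F (fun p => Xp C p) (fun p => |u p|)]
  have h1 : ∏ p ∈ F.filter (fun p => Xp C p), |mulbd C t u p| =
      t ^ (F.filter fun p => Xp C p).card * ∏ p ∈ F.filter (fun p => Xp C p), |u p| := by
    rw [← Finset.prod_const, ← Finset.prod_mul_distrib]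
    refine Finset.prod_congr rfl fun p hp => ?_
    rw [mulbd, if_pos (Finset.mem_filter.1 hp).2, abs_mul, abs_of_nonneg ht]
  have h2 : ∏ p ∈ F.filter (fun p => ¬ Xp C p), |mulbd C t u p| =
      ∏ p ∈ F.filter (fun p => ¬ Xp C p), |u p| := by
    refine Finset.prod_congr rfl fun p hp => ?_
    rw [mulbd, if_neg (Finset.mem_filter.1 hp).2]
  rw [h1, h2]; ring

lemma Cb_ends {C : Finset (Fin n)} {b : Fin n} (hb : b ∉ C) {r : Fin n × Fin n}
    (hr : r ∈ Cb C b) : (r.1 ∈ C ∧ r.2 = b) ∨ (r.1 = b ∧ r.2 ∈ C) := by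
  rcases Finset.mem_sdiff.1 hr with ⟨h1, h2⟩
  rcases mem_pr.1 h1 with ⟨e1, e2, hlt⟩
  rcases Finset.mem_insert.1 e1 with f1 | f1 <;> rcases Finset.mem_insert.1 e2 with f2 | f2
  · exact absurd (f2 ▸ f1 : r.1 = r.2) (ne_of_lt hlt)
  · exact Or.inr ⟨f1, f2⟩
  · exact Or.inl ⟨f1, f2⟩
  · exact absurd (mem_pr.2 ⟨f1, f2, hlt⟩) h2

/-- the mass identity: trees of the contraction by `C` are counted exactly once. -/
lemma mass {S C : Finset (Fin n)} (u : Fin n × Fin n → ℝ) (hCS : C ⊆ S) (hC : C.Nonempty)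
    (hSC : (S \ C).Nonempty) :
    ∑ q ∈ bd C S, |u q| * ∑ F ∈ Compl S (insert (out C q) C),
      (((F.filter fun p => Xp C p).card + 1 : ℝ))⁻¹ * ∏ p ∈ F, |u p|
    = MM u S C := by
  have lhs : ∑ q ∈ bd C S, |u q| * ∑ F ∈ Compl S (insert (out C q) C),
      (((F.filter fun p => Xp C p).card + 1 : ℝ))⁻¹ * ∏ p ∈ F, |u p| =
      ∑ x ∈ (bd C S).sigma (fun q => Compl S (insert (out C q) C)),
      (((x.2.filter fun p => Xp C p).card + 1 : ℝ))⁻¹ * (|u x.1| * ∏ p ∈ x.2, |u p|) := by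
    rw [Finset.sum_sigma]
    refine Finset.sum_congr rfl fun q _ => ?_
    rw [Finset.mul_sum]
    refine Finset.sum_congr rfl fun F _ => by ring
  have rhs : MM u S C = ∑ x ∈ (Compl S C).sigma (fun F => F.filter fun p => Xp C p),
      (((x.1.filter fun p => Xp C p).card : ℝ))⁻¹ * ∏ p ∈ x.1, |u p| := by
    rw [MM, Finset.sum_sigma]
    refine Finset.sum_congr rfl fun F hF => ?_
    rcases Finset.mem_filter.1 hF with ⟨hF1, hF2, hF3⟩
    have hFsub : F ⊆ pr S \ pr C := Finset.mem_powerset.1 hF1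
    obtain ⟨q, hqF, hxq⟩ := connQ_exists_bd hF2 hCS hC hSC
    have hne : (F.filter fun p => Xp C p).Nonempty := ⟨q, Finset.mem_filter.2 ⟨hqF, hxq⟩⟩
    have hpos : 0 < (F.filter fun p => Xp C p).card := Finset.card_pos.2 hne
    show ∏ p ∈ F, |u p| = ∑ _s ∈ (F.filter fun p => Xp C p),
      (((F.filter fun p => Xp C p).card : ℝ))⁻¹ * ∏ p ∈ F, |u p|
    rw [Finset.sum_const, nsmul_eq_mul]
    rw [← mul_assoc, mul_inv_cancel₀ (Nat.cast_ne_zero.2 (by omega)), one_mul]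
  rw [lhs, rhs]
  refine Finset.sum_nbij' (fun x => ⟨insert x.1 x.2, x.1⟩) (fun x => ⟨x.2, x.1.erase x.2⟩)
    ?_ ?_ ?_ ?_ ?_
  · -- forward membership
    rintro ⟨q, F⟩ hx
    rcases Finset.mem_sigma.1 hx with ⟨hq, hF⟩
    rcases mem_bd.1 hq with ⟨hqS, hxq⟩
    set b := out C q with hb
    have hbC : b ∉ C := out_not_mem hxq
    rcases Finset.mem_filter.1 hF with ⟨hF1, hF2, hF3⟩
    have hFsub : F ⊆ pr S \ pr (insert b C) := Finset.mem_powerset.1 hF1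
    have hqprC' : q ∈ pr (insert b C) :=
      mem_pr.2 ⟨(out_ends hxq).1, (out_ends hxq).2, (mem_pr.1 hqS).2.2⟩
    have hqF : q ∉ F := fun hc => (Finset.mem_sdiff.1 (hFsub hc)).2 hqprC'
    refine Finset.mem_sigma.2 ⟨?_, ?_⟩
    · refine Finset.mem_filter.2 ⟨Finset.mem_powerset.2 ?_, ?_, ?_⟩
      · refine Finset.insert_subset (Finset.mem_sdiff.2 ⟨hqS, fun hc =>
          not_xp_of_pr hc hxq⟩) ?_
        intro r hr
        rcases Finset.mem_sdiff.1 (hFsub hr) with ⟨h1, h2⟩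
        exact Finset.mem_sdiff.2 ⟨h1, fun hc => h2 (pr_mono (Finset.subset_insert _ _) hc)⟩
      · exact connQ_shrink (out_ends hxq).1 (out_ends hxq).2 hxq hF2
      · have hF3' : F.card + (insert b C).card = S.card := hF3
        rw [Finset.card_insert_of_notMem hbC] at hF3'
        rw [Finset.card_insert_of_notMem hqF]
        omega
    · exact Finset.mem_filter.2 ⟨Finset.mem_insert_self _ _, hxq⟩
  · -- backward membership
    rintro ⟨F, q⟩ hx
    rcases Finset.mem_sigma.1 hx with ⟨hF, hq⟩
    rcases Finset.mem_filter.1 hq with ⟨hqF, hxq⟩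
    rcases Finset.mem_filter.1 hF with ⟨hF1, hF2, hF3⟩
    have hFsub : F ⊆ pr S \ pr C := Finset.mem_powerset.1 hF1
    have hqS : q ∈ pr S := (Finset.mem_sdiff.1 (hFsub hqF)).1
    set b := out C q with hb
    have hbC : b ∉ C := out_not_mem hxq
    refine Finset.mem_sigma.2 ⟨mem_bd.2 ⟨hqS, hxq⟩, ?_⟩
    refine Finset.mem_filter.2 ⟨Finset.mem_powerset.2 ?_, ?_, ?_⟩
    · -- no other pair of F may lie inside insert b C
      intro r hr
      rcases Finset.mem_erase.1 hr with ⟨hrq, hrF⟩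
      rcases Finset.mem_sdiff.1 (hFsub hrF) with ⟨h1, h2⟩
      refine Finset.mem_sdiff.2 ⟨h1, fun hc => ?_⟩
      -- r ∈ pr (insert b C) \ pr C, i.e. r ∈ Cb C b : contradiction with minimality
      have hrCb : r ∈ Cb C b := Finset.mem_sdiff.2 ⟨hc, h2⟩
      have hconn' : connQ S C (F.erase q) := by
        intro A hA a1 a2
        rcases hF2 A hA a1 a2 with hleft | ⟨p, hp, hxp⟩
        · exact Or.inl hleft
        · by_cases hpq : p = q
          · subst hpq
            by_cases hCA : (C ∩ A).Nonempty ∧ (C \ A).Nonempty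
            · exact Or.inl hCA
            · -- C is on one side of A; transfer the crossing from q to r
              refine Or.inr ⟨r, Finset.mem_erase.2 ⟨hrq, hrF⟩, ?_⟩
              have hq_ends := Cb_ends hbC (bd_mem_Cb (mem_bd.2 ⟨hqS, hxq⟩))
              have hr_ends := Cb_ends hbC hrCb
              have huni : (∀ c ∈ C, c ∈ A) ∨ (∀ c ∈ C, c ∉ A) := by
                by_cases hint : (C ∩ A).Nonempty
                · left; intro c hc
                  by_contra hcA
                  exact hCA ⟨hint, ⟨c, Finset.mem_sdiff.2 ⟨hc, hcA⟩⟩⟩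
                · right; intro c hc hcA
                  exact hint ⟨c, Finset.mem_inter.2 ⟨hc, hcA⟩⟩
              -- determine on which side b is
              have hbside : (b ∈ A ∧ ∀ c ∈ C, c ∉ A) ∨ (b ∉ A ∧ ∀ c ∈ C, c ∈ A) := by
                rcases huni with huni | huni
                · right
                  rcases hq_ends with ⟨e1, e2⟩ | ⟨e1, e2⟩
                  · rcases hxp with ⟨v1, v2⟩ | ⟨v1, v2⟩
                    · exact ⟨e2 ▸ v2, huni⟩
                    · exact absurd (huni _ e1) v2
                  · rcases hxp with ⟨v1, v2⟩ | ⟨v1, v2⟩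
                    · exact absurd (huni _ e2) v2
                    · exact ⟨e1 ▸ v2, huni⟩
                · left
                  rcases hq_ends with ⟨e1, e2⟩ | ⟨e1, e2⟩
                  · rcases hxp with ⟨v1, v2⟩ | ⟨v1, v2⟩
                    · exact absurd v1 (huni _ e1)
                    · exact ⟨e2 ▸ v1, huni⟩
                  · rcases hxp with ⟨v1, v2⟩ | ⟨v1, v2⟩
                    · exact ⟨e1 ▸ v1, huni⟩
                    · exact absurd v1 (huni _ e2)
              rcases hbside with ⟨hbA, hCnA⟩ | ⟨hbA, hCA'⟩
              · rcases hr_ends with ⟨e1, e2⟩ | ⟨e1, e2⟩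
                · exact Or.inr ⟨e2 ▸ hbA, hCnA _ e1⟩
                · exact Or.inl ⟨e1 ▸ hbA, hCnA _ e2⟩
              · rcases hr_ends with ⟨e1, e2⟩ | ⟨e1, e2⟩
                · exact Or.inl ⟨hCA' _ e1, e2 ▸ hbA⟩
                · exact Or.inr ⟨hCA' _ e2, e1 ▸ hbA⟩
          · exact Or.inr ⟨p, Finset.mem_erase.2 ⟨hpq, hp⟩, hxp⟩
      have hlb := card_lb (S.card - C.card) C (F.erase q) hCS hC
        (fun r hr => (Finset.mem_sdiff.1 (hFsub (Finset.mem_of_mem_erase hr))).1)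
        hconn' (le_refl _)
      rw [Finset.card_erase_of_mem hqF] at hlb
      have hqpos : 0 < F.card := Finset.card_pos.2 ⟨q, hqF⟩
      have hF3' : F.card + C.card = S.card := hF3
      omega
    · exact connQ_grow hqF (out_ends hxq).1 (out_ends hxq).2 hF2
    · rw [Finset.card_erase_of_mem hqF, Finset.card_insert_of_notMem hbC]
      have hqpos : 0 < F.card := Finset.card_pos.2 ⟨q, hqF⟩
      have hF3' : F.card + C.card = S.card := hF3
      omega
  · -- left inverse
    rintro ⟨q, F⟩ hx
    rcases Finset.mem_sigma.1 hx with ⟨hq, hF⟩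
    rcases mem_bd.1 hq with ⟨hqS, hxq⟩
    rcases Finset.mem_filter.1 hF with ⟨hF1, _, _⟩
    have hFsub : F ⊆ pr S \ pr (insert (out C q) C) := Finset.mem_powerset.1 hF1
    have hqprC' : q ∈ pr (insert (out C q) C) :=
      mem_pr.2 ⟨(out_ends hxq).1, (out_ends hxq).2, (mem_pr.1 hqS).2.2⟩
    have hqF : q ∉ F := fun hc => (Finset.mem_sdiff.1 (hFsub hc)).2 hqprC'
    show (⟨q, (insert q F).erase q⟩ : Σ _ : Fin n × Fin n, Finset (Fin n × Fin n)) = ⟨q, F⟩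
    rw [Finset.erase_insert hqF]
  · -- right inverse
    rintro ⟨F, q⟩ hx
    rcases Finset.mem_sigma.1 hx with ⟨hF, hq⟩
    rcases Finset.mem_filter.1 hq with ⟨hqF, hxq⟩
    show (⟨insert q (F.erase q), q⟩ : Σ _ : Finset (Fin n × Fin n), Fin n × Fin n) = ⟨F, q⟩
    rw [Finset.insert_erase hqF]
  · -- terms
    rintro ⟨q, F⟩ hx
    rcases Finset.mem_sigma.1 hx with ⟨hq, hF⟩
    rcases mem_bd.1 hq with ⟨hqS, hxq⟩
    rcases Finset.mem_filter.1 hF with ⟨hF1, _, _⟩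
    have hFsub : F ⊆ pr S \ pr (insert (out C q) C) := Finset.mem_powerset.1 hF1
    have hqprC' : q ∈ pr (insert (out C q) C) :=
      mem_pr.2 ⟨(out_ends hxq).1, (out_ends hxq).2, (mem_pr.1 hqS).2.2⟩
    have hqF : q ∉ F := fun hc => (Finset.mem_sdiff.1 (hFsub hc)).2 hqprC'
    have hfilt : (insert q F).filter (fun p => Xp C p) =
        insert q (F.filter (fun p => Xp C p)) := by
      rw [Finset.filter_insert, if_pos hxq]
    have hqFf : q ∉ F.filter (fun p => Xp C p) := fun hc => hqF (Finset.mem_filter.1 hc).1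
    have key : ((((insert q F).filter fun p => Xp C p).card : ℝ))⁻¹ * ∏ p ∈ insert q F, |u p| =
        (((F.filter fun p => Xp C p).card : ℝ) + 1)⁻¹ * (|u q| * ∏ p ∈ F, |u p|) := by
      rw [hfilt, Finset.card_insert_of_notMem hqFf, Finset.prod_insert hqF]
      push_cast
      ring_nf
    exact key.symm

/- ### the main induction -/

lemma ind {S : Finset (Fin n)} {v : Fin n × Fin n → ℝ} {bf : Fin n → ℝ}
    (hstabv : ∀ T ⊆ S, -∑ i ∈ T, bf i ≤ ∑ p ∈ pr T, v p) :
    ∀ (k : ℕ) (C : Finset (Fin n)) (u : Fin n × Fin n → ℝ), Adm S v C u →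
      C.card + k = S.card →
      |Psi u S C| ≤ Real.exp (∑ i ∈ S, bf i) * (Real.exp (AA u C) * MM u S C) := by
  intro k
  induction k with
  | zero =>
    intro C u hadm hcard
    have hCS : C = S := Finset.eq_of_subset_of_card_le hadm.subset (by omega)
    subst hCS
    rw [Psi_self, MM_self, abs_one, mul_one]
    have hAA : -∑ i ∈ C, bf i ≤ AA u C := by
      have := stab_adm hstabv hadm (fun _ => 0) (fun _ _ _ _ => rfl)
      rwa [Finset.filter_true_of_mem (fun _ _ => rfl)] at this
    rw [← Real.exp_add]
    rw [show (1:ℝ) = Real.exp 0 by rw [Real.exp_zero]]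
    exact Real.exp_le_exp.2 (by linarith)
  | succ k ih =>
    intro C u hadm hcard
    have hCS : C ⊆ S := hadm.subset
    have hC : C.Nonempty := hadm.nonempty
    have hSC : (S \ C).Nonempty := by
      rw [← Finset.card_pos, Finset.card_sdiff_of_subset hCS]; omega
    rw [L1 u hCS hC hSC]
    -- continuity of the integrand, for integrability
    have hcont : ∀ q : Fin n × Fin n, Continuous (fun t =>
        Real.exp (-(t * ∑ p ∈ Cb C (out C q), u p)) * (-(u q)) *
          Psi (mulbd C t u) S (insert (out C q) C)) := by
      intro q
      exact (((continuous_id.mul continuous_const).neg.rexp).mul continuous_const).mul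
        (cont_psi u _)
    -- the dominating function
    set G : (Fin n × Fin n) → ℝ → ℝ := fun q t =>
      Real.exp (∑ i ∈ S, bf i) * Real.exp (AA u C) * (|u q| *
        ∑ F ∈ Compl S (insert (out C q) C),
          t ^ (F.filter fun p => Xp C p).card * ∏ p ∈ F, |u p|) with hGdef
    have hGcont : ∀ q : Fin n × Fin n, Continuous (G q) := by
      intro q
      refine continuous_const.mul (continuous_const.mul ?_)
      exact continuous_finset_sum _ fun F _ => (continuous_pow _).mul continuous_const
    -- pointwise bound on [0,1]
    have hptwise : ∀ q ∈ bd C S, ∀ t ∈ Set.Icc (0:ℝ) 1,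
        |Real.exp (-(t * ∑ p ∈ Cb C (out C q), u p)) * (-(u q)) *
          Psi (mulbd C t u) S (insert (out C q) C)| ≤ G q t := by
      intro q hq t ht
      rcases ht with ⟨ht0, ht1⟩
      rcases mem_bd.1 hq with ⟨hqS, hxq⟩
      set b := out C q with hb
      have hbC : b ∉ C := out_not_mem hxq
      have hbS : b ∈ S := out_mem_S hqS
      have hadm' : Adm S v (insert b C) (mulbd C t u) := hadm.step hbS hbC ht0 ht1
      have hcard' : (insert b C).card + k = S.card := by
        rw [Finset.card_insert_of_notMem hbC]; omega
      have hIH := ih (insert b C) (mulbd C t u) hadm' hcard'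
      rw [abs_mul, abs_mul, abs_neg, abs_of_pos (Real.exp_pos _)]
      have hMM : MM (mulbd C t u) S (insert b C) =
          ∑ F ∈ Compl S (insert b C),
            t ^ (F.filter fun p => Xp C p).card * ∏ p ∈ F, |u p| := MM_mulbd ht0 u
      have hAA : AA (mulbd C t u) (insert b C) = AA u C + t * ∑ p ∈ Cb C b, u p :=
        AA_insert hbC t u
      rw [hMM, hAA] at hIH
      have hexp : Real.exp (-(t * ∑ p ∈ Cb C b, u p)) *
          Real.exp (AA u C + t * ∑ p ∈ Cb C b, u p) = Real.exp (AA u C) := by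
        rw [← Real.exp_add]; ring_nf
      calc Real.exp (-(t * ∑ p ∈ Cb C b, u p)) * |u q| *
            |Psi (mulbd C t u) S (insert b C)|
          ≤ Real.exp (-(t * ∑ p ∈ Cb C b, u p)) * |u q| *
            (Real.exp (∑ i ∈ S, bf i) * (Real.exp (AA u C + t * ∑ p ∈ Cb C b, u p) *
              ∑ F ∈ Compl S (insert b C),
                t ^ (F.filter fun p => Xp C p).card * ∏ p ∈ F, |u p|)) := by
            refine mul_le_mul_of_nonneg_left hIH ?_
            positivity
        _ = G q t := by
            rw [hGdef]
            simp only []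
            rw [← hexp]
            ring
    -- bound the sum of integrals
    have hstep1 : |∑ q ∈ bd C S, ∫ t in (0:ℝ)..1,
        Real.exp (-(t * ∑ p ∈ Cb C (out C q), u p)) * (-(u q)) *
          Psi (mulbd C t u) S (insert (out C q) C)| ≤
        ∑ q ∈ bd C S, ∫ t in (0:ℝ)..1, G q t := by
      refine (Finset.abs_sum_le_sum_abs _ _).trans ?_
      refine Finset.sum_le_sum fun q hq => ?_
      refine (intervalIntegral.abs_integral_le_integral_abs (by norm_num)).trans ?_
      refine intervalIntegral.integral_mono_on (by norm_num)
        ((hcont q).abs.intervalIntegrable 0 1) ((hGcont q).intervalIntegrable 0 1) ?_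
      exact hptwise q hq
    refine hstep1.trans ?_
    -- compute the integrals
    have hstep2 : ∀ q : Fin n × Fin n, (∫ t in (0:ℝ)..1, G q t) =
        Real.exp (∑ i ∈ S, bf i) * Real.exp (AA u C) * (|u q| *
          ∑ F ∈ Compl S (insert (out C q) C),
            (((F.filter fun p => Xp C p).card + 1 : ℝ))⁻¹ * ∏ p ∈ F, |u p|) := by
      intro q
      rw [hGdef]
      simp only []
      rw [intervalIntegral.integral_const_mul, intervalIntegral.integral_const_mul,
        intervalIntegral.integral_finsetSum (f := fun F (x : ℝ) =>
          x ^ (F.filter fun p => Xp C p).card * ∏ p ∈ F, |u p|) (fun F _ =>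
          ((continuous_pow _).mul continuous_const).intervalIntegrable 0 1)]
      congr 2
      refine Finset.sum_congr rfl fun F _ => ?_
      rw [intervalIntegral.integral_mul_const, integral_pow]
      norm_num
    rw [Finset.sum_congr rfl (fun q _ => hstep2 q)]
    rw [← Finset.mul_sum, mul_assoc, mass u hCS hC hSC]

/-- the core tree-graph bound, for finite weights. -/
lemma core {S : Finset (Fin n)} {v : Fin n × Fin n → ℝ} {bf : Fin n → ℝ} {r : Fin n}
    (hr : r ∈ S)
    (hstabv : ∀ T ⊆ S, -∑ i ∈ T, bf i ≤ ∑ p ∈ pr T, v p) :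
    |Psi v S {r}| ≤ Real.exp (∑ i ∈ S, bf i) * MM v S {r} := by
  have hcard : ({r} : Finset (Fin n)).card + (S.card - 1) = S.card := by
    rw [Finset.card_singleton]
    have : 1 ≤ S.card := Finset.card_pos.2 ⟨r, hr⟩
    omega
  have := ind hstabv (S.card - 1) {r} v (Adm.base r hr) hcard
  rwa [AA, pr_singleton, Finset.sum_empty, Real.exp_zero, one_mul] at this

/- ### singleton-cluster identifications -/

lemma PsiSet_singleton {S : Finset (Fin n)} (r : Fin n) : PsiSet S {r} = graphsOn S := by
  unfold PsiSet graphsOn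
  rw [pr_singleton, Finset.sdiff_empty]
  exact Finset.filter_congr fun E _ => connQ_singleton

lemma Compl_singleton {S : Finset (Fin n)} (r : Fin n) : Compl S {r} = treesOn S := by
  ext E
  simp only [Compl, Finset.mem_filter, Finset.mem_powerset, pr_singleton, Finset.sdiff_empty,
    mem_treesOn, Finset.card_singleton]
  constructor
  · rintro ⟨h1, h2, h3⟩; exact ⟨h1, connQ_singleton.1 h2, h3⟩
  · rintro ⟨h1, h2, h3⟩; exact ⟨h1, connQ_singleton.2 h2, h3⟩

lemma TOn_nonneg {g : Fin n × Fin n → ℝ} (hg : ∀ p, 0 ≤ g p) (S : Finset (Fin n)) :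
    0 ≤ TOn g S :=
  Finset.sum_nonneg fun F _ => Finset.prod_nonneg fun p _ => hg p

/- ### transfer of the stability hypothesis -/

lemma coe_sum_ereal {α : Type*} (s : Finset α) (f : α → ℝ) :
    ((∑ x ∈ s, f x : ℝ) : EReal) = ∑ x ∈ s, (f x : EReal) := by
  classical
  induction s using Finset.induction_on with
  | empty => simp
  | insert _ _ hx ih => rw [Finset.sum_insert hx, Finset.sum_insert hx, EReal.coe_add, ih]

lemma ereal_sum_toReal {α : Type*} (s : Finset α) (f : α → EReal)
    (h : ∀ x ∈ s, f x ≠ ⊤ ∧ f x ≠ ⊥) :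
    ∑ x ∈ s, f x = ((∑ x ∈ s, (f x).toReal : ℝ) : EReal) := by
  classical
  induction s using Finset.induction_on with
  | empty => simp
  | @insert a s hx ih =>
    rw [Finset.sum_insert hx, Finset.sum_insert hx, EReal.coe_add,
      EReal.coe_toReal (h a (Finset.mem_insert_self a s)).1 (h a (Finset.mem_insert_self a s)).2,
      ih (fun x hxs => h x (Finset.mem_insert_of_mem hxs))]

lemma pr_univ {m : ℕ} : pr (Finset.univ : Finset (Fin m)) =
    Finset.univ.filter (fun p : Fin m × Fin m => p.1 < p.2) := by
  rw [pr, Finset.univ_product_univ]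

section Transfer

variable {P : Type*} (V : P → P → EReal) (B : P → ℝ)
variable (γ : Fin n → P)

lemma stab_subset (hVbot : ∀ γ γ', V γ γ' ≠ ⊥)
    (hstab : ∀ (m : ℕ) (δ : Fin m → P), -(∑ i, (B (δ i) : EReal)) ≤ pairEnergy V m δ)
    (T : Finset (Fin n)) (hfin : ∀ p ∈ pr T, V (γ p.1) (γ p.2) ≠ ⊤) :
    -∑ i ∈ T, B (γ i) ≤ ∑ p ∈ pr T, (V (γ p.1) (γ p.2)).toReal := by
  classical
  set m := T.card with hm
  set f := T.orderIsoOfFin rfl with hf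
  set g : Fin m → Fin n := fun i => (f i : Fin n) with hg
  have hgT : ∀ i, g i ∈ T := fun i => (f i).2
  have hglt : ∀ i j : Fin m, i < j ↔ g i < g j := by
    intro i j
    rw [hg]
    constructor
    · intro h; exact Subtype.coe_lt_coe.2 (f.lt_iff_lt.2 h)
    · intro h; exact f.lt_iff_lt.1 (Subtype.coe_lt_coe.1 h)
  have hstab' := hstab m (fun i => γ (g i))
  -- reindex the pair energy
  have hpair : pairEnergy V m (fun i => γ (g i)) = ∑ p ∈ pr T, V (γ p.1) (γ p.2) := by
    rw [pairEnergy]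
    refine Finset.sum_bij' (fun p _ => ((g p.1, g p.2) : Fin n × Fin n))
      (fun q hq => ((f.symm ⟨q.1, (mem_pr.1 hq).1⟩, f.symm ⟨q.2, (mem_pr.1 hq).2.1⟩) :
        Fin m × Fin m)) ?_ ?_ ?_ ?_ ?_
    · intro p hp
      have hlt := (Finset.mem_filter.1 hp).2
      exact mem_pr.2 ⟨hgT _, hgT _, (hglt _ _).1 hlt⟩
    · intro q hq
      refine Finset.mem_filter.2 ⟨Finset.mem_univ _, ?_⟩
      have hlt := (mem_pr.1 hq).2.2
      have : (⟨q.1, (mem_pr.1 hq).1⟩ : {x // x ∈ T}) < ⟨q.2, (mem_pr.1 hq).2.1⟩ :=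
        Subtype.mk_lt_mk.2 hlt
      exact f.symm.lt_iff_lt.2 this
    · intro p hp
      have e1 : f.symm ⟨g p.1, hgT p.1⟩ = p.1 := by
        have h1 : (⟨g p.1, hgT p.1⟩ : {x // x ∈ T}) = f p.1 := Subtype.ext rfl
        rw [h1, f.symm_apply_apply]
      have e2 : f.symm ⟨g p.2, hgT p.2⟩ = p.2 := by
        have h1 : (⟨g p.2, hgT p.2⟩ : {x // x ∈ T}) = f p.2 := Subtype.ext rfl
        rw [h1, f.symm_apply_apply]
      exact Prod.ext e1 e2
    · intro q hq
      have e1 : (g (f.symm ⟨q.1, (mem_pr.1 hq).1⟩) : Fin n) = q.1 := by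
        show ((f (f.symm ⟨q.1, (mem_pr.1 hq).1⟩) : {x // x ∈ T}) : Fin n) = q.1
        rw [f.apply_symm_apply]
      have e2 : (g (f.symm ⟨q.2, (mem_pr.1 hq).2.1⟩) : Fin n) = q.2 := by
        show ((f (f.symm ⟨q.2, (mem_pr.1 hq).2.1⟩) : {x // x ∈ T}) : Fin n) = q.2
        rw [f.apply_symm_apply]
      exact Prod.ext e1 e2
    · intro p _; rfl
  -- reindex the B-sum
  have hBsum : ∑ i, B (γ (g i)) = ∑ x ∈ T, B (γ x) := by
    refine Finset.sum_bij' (fun i _ => g i) (fun x hx => f.symm ⟨x, hx⟩) ?_ ?_ ?_ ?_ ?_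
    · intro i _; exact hgT i
    · intro x hx; exact Finset.mem_univ _
    · intro i _
      show f.symm ⟨g i, hgT i⟩ = i
      have h1 : (⟨g i, hgT i⟩ : {x // x ∈ T}) = f i := Subtype.ext rfl
      rw [h1, f.symm_apply_apply]
    · intro x hx
      show ((f (f.symm ⟨x, hx⟩) : {x // x ∈ T}) : Fin n) = x
      rw [f.apply_symm_apply]
    · intro i _; rfl
  rw [hpair] at hstab'
  have htop : ∀ p ∈ pr T, V (γ p.1) (γ p.2) ≠ ⊤ ∧ V (γ p.1) (γ p.2) ≠ ⊥ :=
    fun p hp => ⟨hfin p hp, hVbot _ _⟩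
  rw [ereal_sum_toReal _ _ htop] at hstab'
  have hcoe : (∑ i, (B (γ (g i)) : EReal)) = ((∑ x ∈ T, B (γ x) : ℝ) : EReal) := by
    rw [← hBsum, coe_sum_ereal]
  rw [hcoe, ← EReal.coe_neg] at hstab'
  exact_mod_cast hstab'

end Transfer

/- ### the master induction -/

section Master

variable {P : Type*} {V : P → P → EReal} {B : P → ℝ} {γ : Fin n → P}

lemma master (hVbot : ∀ γ γ', V γ γ' ≠ ⊥)
    (hstab : ∀ (m : ℕ) (δ : Fin m → P), -(∑ i, (B (δ i) : EReal)) ≤ pairEnergy V m δ) :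
    ∀ (k : ℕ) (S : Finset (Fin n)), S.card ≤ k → S.Nonempty →
      |UOn (fun p => eweight (V (γ p.1) (γ p.2))) S| ≤
        Real.exp (∑ i ∈ S, B (γ i)) *
          TOn (fun p => Freal V (γ p.1) (γ p.2)) S := by
  intro k
  set w : Fin n × Fin n → ℝ := fun p => eweight (V (γ p.1) (γ p.2)) with hw
  set Fw : Fin n × Fin n → ℝ := fun p => Freal V (γ p.1) (γ p.2) with hFw
  have hFw0 : ∀ p, 0 ≤ Fw p := by
    intro p
    show 0 ≤ Freal V (γ p.1) (γ p.2)
    unfold Freal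
    split
    · norm_num
    · exact abs_nonneg _
  induction k with
  | zero =>
    intro S hcard hne
    exact absurd (Finset.card_pos.2 hne) (by omega)
  | succ k ih =>
    intro S hcard hne
    by_cases hhc : ∃ e ∈ pr S, V (γ e.1) (γ e.2) = ⊤
    · -- hard-core case: divide and conquer
      obtain ⟨e, he, htop⟩ := hhc
      obtain ⟨haS, hbS, hab⟩ := mem_pr.1 he
      have hwe : w e = -1 := by
        show eweight (V (γ e.1) (γ e.2)) = -1
        unfold eweight; rw [if_pos htop]
      have hFwe : Fw e = 1 := by
        show Freal V (γ e.1) (γ e.2) = 1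
        unfold Freal; rw [if_pos htop]
      rw [hc_split he hwe, abs_neg]
      have step : ∀ A ∈ (S.erase e.2).powerset.filter (fun A => e.1 ∈ A),
          |UOn w A * UOn w (S \ A)| ≤
            Real.exp (∑ i ∈ S, B (γ i)) * (TOn Fw A * TOn Fw (S \ A)) := by
        intro A hA
        rcases Finset.mem_filter.1 hA with ⟨hA1, haA⟩
        have hAeb : A ⊆ S.erase e.2 := Finset.mem_powerset.1 hA1
        have hAS : A ⊆ S := hAeb.trans (Finset.erase_subset _ _)
        have hbA : e.2 ∉ A := fun hc => (Finset.mem_erase.1 (hAeb hc)).1 rfl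
        have hAne : A.Nonempty := ⟨e.1, haA⟩
        have hSAne : (S \ A).Nonempty := ⟨e.2, Finset.mem_sdiff.2 ⟨hbS, hbA⟩⟩
        have hcardA : A.card ≤ k := by
          have h1 : A.card ≤ (S.erase e.2).card := Finset.card_le_card hAeb
          rw [Finset.card_erase_of_mem hbS] at h1
          omega
        have hcardSA : (S \ A).card ≤ k := by
          rw [Finset.card_sdiff_of_subset hAS]
          have : 1 ≤ A.card := Finset.card_pos.2 hAne
          omega
        have h1 := ih A hcardA hAne
        have h2 := ih (S \ A) hcardSA hSAne
        rw [abs_mul]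
        calc |UOn w A| * |UOn w (S \ A)| ≤
            (Real.exp (∑ i ∈ A, B (γ i)) * TOn Fw A) *
            (Real.exp (∑ i ∈ S \ A, B (γ i)) * TOn Fw (S \ A)) := by
              refine mul_le_mul h1 h2 (abs_nonneg _) ?_
              exact mul_nonneg (le_of_lt (Real.exp_pos _)) (TOn_nonneg hFw0 _)
          _ = Real.exp (∑ i ∈ S, B (γ i)) * (TOn Fw A * TOn Fw (S \ A)) := by
              rw [← Finset.sum_sdiff hAS, Real.exp_add]
              ring
      calc |∑ A ∈ (S.erase e.2).powerset.filter (fun A => e.1 ∈ A),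
            UOn w A * UOn w (S \ A)|
          ≤ ∑ A ∈ (S.erase e.2).powerset.filter (fun A => e.1 ∈ A),
            |UOn w A * UOn w (S \ A)| := Finset.abs_sum_le_sum_abs _ _
        _ ≤ ∑ A ∈ (S.erase e.2).powerset.filter (fun A => e.1 ∈ A),
            Real.exp (∑ i ∈ S, B (γ i)) * (TOn Fw A * TOn Fw (S \ A)) :=
            Finset.sum_le_sum step
        _ = Real.exp (∑ i ∈ S, B (γ i)) * ∑ A ∈ (S.erase e.2).powerset.filter
            (fun A => e.1 ∈ A), TOn Fw A * TOn Fw (S \ A) := by rw [Finset.mul_sum]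
        _ ≤ Real.exp (∑ i ∈ S, B (γ i)) * TOn Fw S := by
            refine mul_le_mul_of_nonneg_left ?_ (le_of_lt (Real.exp_pos _))
            exact tree_glue hFw0 he hFwe
    · -- no hard cores: apply the core bound
      push_neg at hhc
      obtain ⟨r, hr⟩ := hne
      set v : Fin n × Fin n → ℝ := fun p => (V (γ p.1) (γ p.2)).toReal with hv
      have hstabv : ∀ T ⊆ S, -∑ i ∈ T, B (γ i) ≤ ∑ p ∈ pr T, v p := by
        intro T hT
        exact stab_subset V B γ hVbot hstab T (fun p hp => hhc p (pr_mono hT hp))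
      have hUOn : UOn w S = Psi v S {r} := by
        rw [Psi, PsiSet_singleton, UOn]
        refine Finset.sum_congr rfl fun E hE => ?_
        refine Finset.prod_congr rfl fun p hp => ?_
        have hpS : p ∈ pr S := (Finset.mem_powerset.1 (Finset.mem_filter.1 hE).1) hp
        show eweight (V (γ p.1) (γ p.2)) = mayer ((V (γ p.1) (γ p.2)).toReal)
        unfold eweight mayer
        rw [if_neg (hhc p hpS)]
      have hMM : MM v S {r} = TOn Fw S := by
        rw [MM, Compl_singleton, TOn]
        refine Finset.sum_congr rfl fun F hF => ?_
        refine Finset.prod_congr rfl fun p hp => ?_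
        have hpS : p ∈ pr S := (mem_treesOn.1 hF).1 hp
        show |(V (γ p.1) (γ p.2)).toReal| = Freal V (γ p.1) (γ p.2)
        unfold Freal
        rw [if_neg (hhc p hpS)]
      rw [hUOn, ← hMM]
      exact core hr hstabv

end Master

end TG

lemma graphFinset_eq_graphsOn (n : ℕ) :
    graphFinset n = TG.graphsOn (Finset.univ : Finset (Fin n)) := by
  ext E
  simp only [graphFinset, Finset.mem_filter, Finset.mem_univ, true_and, TG.mem_graphsOn]
  constructor
  · rintro ⟨h1, h2⟩
    refine ⟨fun p hp => TG.mem_pr.2 ⟨Finset.mem_univ _, Finset.mem_univ _, h1 p hp⟩, ?_⟩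
    intro A _ hA1 hA2
    exact h2 A hA1 hA2
  · rintro ⟨h1, h2⟩
    refine ⟨fun p hp => (TG.mem_pr.1 (h1 hp)).2.2, ?_⟩
    intro A hA1 hA2
    exact h2 A (Finset.subset_univ A) hA1 hA2

lemma treeFinset_eq_treesOn {n : ℕ} (hn : 1 ≤ n) :
    treeFinset n = TG.treesOn (Finset.univ : Finset (Fin n)) := by
  rw [treeFinset, graphFinset_eq_graphsOn]
  unfold TG.treesOn
  refine Finset.filter_congr fun E _ => ?_
  rw [Finset.card_univ, Fintype.card_fin]
  omega

theorem stmt5' {P : Type*}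
    (V : P → P → EReal) (hVsym : ∀ γ γ', V γ γ' = V γ' γ)
    (hVbot : ∀ γ γ', V γ γ' ≠ ⊥)
    (B : P → ℝ) (hB : ∀ γ, 0 ≤ B γ)
    (hstab : ∀ (m : ℕ) (γ : Fin m → P),
      -(∑ i, (B (γ i) : EReal)) ≤ pairEnergy V m γ)
    (n : ℕ) (hn : 1 ≤ n) (γ : Fin n → P) :
    |ursell V n γ| ≤ Real.exp (∑ i, B (γ i)) *
      ∑ E ∈ treeFinset n, ∏ p ∈ E, Freal V (γ p.1) (γ p.2) := by
  have huniv : (Finset.univ : Finset (Fin n)).Nonempty := ⟨⟨0, hn⟩, Finset.mem_univ _⟩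
  have hm := TG.master (V := V) (B := B) (γ := γ) hVbot hstab n Finset.univ
    (by rw [Finset.card_univ, Fintype.card_fin]) huniv
  have h1 : ursell V n γ =
      TG.UOn (fun p => eweight (V (γ p.1) (γ p.2))) (Finset.univ : Finset (Fin n)) := by
    rw [ursell, graphFinset_eq_graphsOn]; rfl
  have h2 : (∑ E ∈ treeFinset n, ∏ p ∈ E, Freal V (γ p.1) (γ p.2)) =
      TG.TOn (fun p => Freal V (γ p.1) (γ p.2)) (Finset.univ : Finset (Fin n)) := by
    rw [treeFinset_eq_treesOn hn]; rfl
  rw [h1, h2]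
  exact hm

/-- the tree-graph bound
`|φᵀ(γ₁,…,γₙ)| ≤ e^{Σᵢ B(γᵢ)} Σ_{τ ∈ Tₙ} ∏_{{i,j}∈E_τ} F(γᵢ,γⱼ)`. -/
theorem stmt5 {P : Type*}
    (V : P → P → EReal) (hVsym : ∀ γ γ', V γ γ' = V γ' γ)
    (hVbot : ∀ γ γ', V γ γ' ≠ ⊥)
    (B : P → ℝ) (hB : ∀ γ, 0 ≤ B γ)
    (hstab : ∀ (m : ℕ) (γ : Fin m → P),
      -(∑ i, (B (γ i) : EReal)) ≤ pairEnergy V m γ)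
    (n : ℕ) (hn : 1 ≤ n) (γ : Fin n → P) :
    |ursell V n γ| ≤ Real.exp (∑ i, B (γ i)) *
      ∑ E ∈ treeFinset n, ∏ p ∈ E, Freal V (γ p.1) (γ p.2) := by
  exact stmt5' V hVsym hVbot B hB hstab n hn γ
end
end

section
/- For the polymer representation of the BEG model, the pair potential W(p,p̃) = -β Σ_{x∈p, y∈p̃}[J_{xy}s_x s_y + K_{xy}] for d(p,p̃) ≥ 2 (and +∞ otherwise) is stable with B(p) = βJ|p| - A(p): for all n and all polymers (p₁,...,pₙ), Σ_{1≤i<j≤n} W(pᵢ,pⱼ) ≥ -Σ_{i=1}^n (βJ|pᵢ| - A(pᵢ)), where J = (1/2) sup_x Σ_{y≠x}(J_{xy}+|K_{xy}|) and A(p) = β Σ_{{x,y}⊆p}[J_{xy}s_x s_y + K_{xy}]. -/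
open scoped BigOperators
noncomputable section

/-- The ℓ¹ (nearest-neighbor graph) distance on `ℤ^d`. -/
def dist1 {d : ℕ} (x y : Fin d → ℤ) : ℕ := ∑ i, (x i - y i).natAbs

/-- A polymer of the BEG model: a finite nonempty connected subset of `ℤ^d` together
with a spin assignment taking values `±1` on it. -/
structure Polymer (d : ℕ) where
  supp : Finset (Fin d → ℤ)
  spin : (Fin d → ℤ) → ℤ
  nonempty : supp.Nonempty
  connected : ∀ A B : Finset (Fin d → ℤ), A ∪ B = supp → Disjoint A B →
    A.Nonempty → B.Nonempty → ∃ x ∈ A, ∃ y ∈ B, dist1 x y = 1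
  spin_pm : ∀ x ∈ supp, spin x = 1 ∨ spin x = -1

/-- The polymer pair interaction
`W(p,p̃) = -β Σ_{x∈p, y∈p̃} [J_{xy} s_x s_y + K_{xy}]` if `d(p,p̃) ≥ 2`, and `+∞` otherwise. -/
noncomputable def Wpair {d : ℕ} (β : ℝ) (Jm Km : (Fin d → ℤ) → (Fin d → ℤ) → ℝ)
    (p q : Polymer d) : EReal :=
  if ∃ x ∈ p.supp, ∃ y ∈ q.supp, dist1 x y ≤ 1 then ⊤
  else ((-β * ∑ x ∈ p.supp, ∑ y ∈ q.supp,
    (Jm x y * p.spin x * q.spin y + Km x y) : ℝ) : EReal)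

/-- The self-energy `A(p) = β Σ_{{x,y}⊆p} [J_{xy} s_x s_y + K_{xy}]`. -/
noncomputable def Apoly {d : ℕ} (β : ℝ) (Jm Km : (Fin d → ℤ) → (Fin d → ℤ) → ℝ)
    (p : Polymer d) : ℝ :=
  (β / 2) * ∑ x ∈ p.supp, ∑ y ∈ p.supp,
    if y = x then 0 else (Jm x y * p.spin x * p.spin y + Km x y)

lemma dist1_self {d : ℕ} (x : Fin d → ℤ) : dist1 x x = 0 := by simp [dist1]

lemma ereal_sum_ne_bot {α : Type*} (s : Finset α) (f : α → EReal)
    (h : ∀ a ∈ s, f a ≠ ⊥) : ∑ a ∈ s, f a ≠ ⊥ := by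
  classical
  induction s using Finset.cons_induction with
  | empty => simp
  | cons a s ha ih =>
    rw [Finset.sum_cons]
    intro hc
    rcases EReal.add_eq_bot_iff.mp hc with h1 | h1
    · exact h a (Finset.mem_cons_self a s) h1
    · exact ih (fun b hb => h b (Finset.mem_cons_of_mem hb)) h1

lemma ereal_coe_sum {α : Type*} (s : Finset α) (f : α → ℝ) :
    ((∑ a ∈ s, f a : ℝ) : EReal) = ∑ a ∈ s, ((f a : ℝ) : EReal) :=
  map_sum (⟨⟨Real.toEReal, EReal.coe_zero⟩, EReal.coe_add⟩ : ℝ →+ EReal) f s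

/-- the BEG polymer interaction `W` is stable with `B(p) = βJ|p| - A(p)`:
for all `n` and all polymers `(p₁,…,pₙ)`,
`Σ_{1≤i<j≤n} W(pᵢ,pⱼ) ≥ -Σᵢ (βJ|pᵢ| - A(pᵢ))`, where
`J = (1/2) sup_x Σ_{y≠x} (J_{xy} + |K_{xy}|)`. -/
theorem stmt11 (d : ℕ) (hd : 1 ≤ d) (β : ℝ) (hβ : 0 < β)
    (Jm Km : (Fin d → ℤ) → (Fin d → ℤ) → ℝ)
    (hJpos : ∀ x y, 0 ≤ Jm x y)
    (hJsym : ∀ x y, Jm x y = Jm y x) (hKsym : ∀ x y, Km x y = Km y x)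
    (J : ℝ)
    (hJ : ∀ (x : Fin d → ℤ) (T : Finset (Fin d → ℤ)), x ∉ T →
      ∑ y ∈ T, (Jm x y + |Km x y|) ≤ 2 * J)
    (n : ℕ) (p : Fin n → Polymer d) :
    -(∑ i, ((β * J * ((p i).supp.card : ℝ) - Apoly β Jm Km (p i) : ℝ) : EReal)) ≤
      ∑ pr ∈ Finset.univ.filter (fun pr : Fin n × Fin n => pr.1 < pr.2),
        Wpair β Jm Km (p pr.1) (p pr.2) := by
  classical
  set g : (Fin d → ℤ) → (Fin d → ℤ) → ℝ := fun x y => Jm x y + |Km x y| with hg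
  by_cases hfar : ∀ pr : Fin n × Fin n, pr.1 < pr.2 →
      ¬ ∃ x ∈ (p pr.1).supp, ∃ y ∈ (p pr.2).supp, dist1 x y ≤ 1
  · -- far case: everything is real
    -- pairwise disjoint supports
    have hdisj : ∀ i j : Fin n, i ≠ j → Disjoint (p i).supp (p j).supp := by
      have key : ∀ i j : Fin n, i < j → Disjoint (p i).supp (p j).supp := by
        intro i j hij
        rw [Finset.disjoint_left]
        intro x hx hx'
        exact hfar (i, j) hij ⟨x, hx, x, hx', by simp [dist1_self]⟩
      intro i j hij
      rcases lt_or_gt_of_ne hij with h | h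
      · exact key i j h
      · exact (key j i h).symm
    set S : Fin n → Fin n → ℝ := fun i j =>
      ∑ x ∈ (p i).supp, ∑ y ∈ (p j).supp,
        (Jm x y * (p i).spin x * (p j).spin y + Km x y) with hS
    set D : Fin n → Fin n → ℝ := fun i j =>
      ∑ x ∈ (p i).supp, ∑ y ∈ (p j).supp, g x y with hD
    set E : Fin n → ℝ := fun i =>
      ∑ x ∈ (p i).supp, ∑ y ∈ (p i).supp, (if y = x then 0 else g x y) with hE
    -- pointwise bound on interaction terms
    have hterm : ∀ (i j : Fin n), ∀ x ∈ (p i).supp, ∀ y ∈ (p j).supp,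
        Jm x y * (p i).spin x * (p j).spin y + Km x y ≤ g x y := by
      intro i j x hx y hy
      have h1 := (p i).spin_pm x hx
      have h2 := (p j).spin_pm y hy
      have hK : Km x y ≤ |Km x y| := le_abs_self _
      have hJxy := hJpos x y
      rcases h1 with h1 | h1 <;> rcases h2 with h2 | h2 <;>
        simp only [h1, h2, hg] <;> push_cast <;> nlinarith
    have hSD : ∀ i j : Fin n, S i j ≤ D i j := by
      intro i j
      refine Finset.sum_le_sum fun x hx => Finset.sum_le_sum fun y hy => ?_
      exact hterm i j x hx y hy
    have hDsym : ∀ i j : Fin n, D i j = D j i := by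
      intro i j
      simp only [hD]
      rw [Finset.sum_comm]
      refine Finset.sum_congr rfl fun y hy => Finset.sum_congr rfl fun x hx => ?_
      simp [hg, hJsym y x, hKsym y x]
    have hAE : ∀ i : Fin n, Apoly β Jm Km (p i) ≤ (β / 2) * E i := by
      intro i
      rw [Apoly, hE]
      have hβ2 : (0:ℝ) ≤ β / 2 := by linarith
      refine mul_le_mul_of_nonneg_left ?_ hβ2
      refine Finset.sum_le_sum fun x hx => Finset.sum_le_sum fun y hy => ?_
      by_cases hxy : y = x
      · simp [hxy]
      · simpa [hxy] using hterm i i x hx y hy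
    -- per-site bound
    have hsite : ∀ i : Fin n, ∀ x ∈ (p i).supp,
        (∑ j ∈ Finset.univ.erase i, ∑ y ∈ (p j).supp, g x y) +
          ∑ y ∈ (p i).supp, (if y = x then 0 else g x y) ≤ 2 * J := by
      intro i x hx
      set Sfam : Fin n → Finset (Fin d → ℤ) := fun j =>
        if j = i then (p i).supp.erase x else (p j).supp with hSfam
      have hpd : (↑(Finset.univ : Finset (Fin n)) : Set (Fin n)).PairwiseDisjoint Sfam := by
        intro a _ b _ hab
        simp only [Function.onFun, hSfam]
        split_ifs with h1 h2 h2
        · exact absurd (h1.trans h2.symm) hab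
        · exact Finset.disjoint_of_subset_left (Finset.erase_subset _ _)
            (hdisj i b fun h => h2 h.symm)
        · exact Finset.disjoint_of_subset_right (Finset.erase_subset _ _)
            (hdisj a i h1)
        · exact hdisj a b (fun h => hab h)
      have hsum : ∑ y ∈ Finset.univ.biUnion Sfam, g x y
          = ∑ j : Fin n, ∑ y ∈ Sfam j, g x y := Finset.sum_biUnion hpd
      have hx' : x ∉ Finset.univ.biUnion Sfam := by
        intro hmem
        rw [Finset.mem_biUnion] at hmem
        obtain ⟨j, -, hj⟩ := hmem
        revert hj
        simp only [hSfam]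
        split_ifs with h
        · exact Finset.notMem_erase x _
        · exact fun hxj => (Finset.disjoint_left.mp (hdisj i j fun hh => h hh.symm) hx) hxj
      have hbound := hJ x (Finset.univ.biUnion Sfam) hx'
      have hsplit : ∑ j : Fin n, ∑ y ∈ Sfam j, g x y
          = (∑ y ∈ (p i).supp.erase x, g x y) +
            ∑ j ∈ Finset.univ.erase i, ∑ y ∈ (p j).supp, g x y := by
        rw [← Finset.add_sum_erase _ _ (Finset.mem_univ i)]
        congr 1
        · simp only [hSfam, if_pos rfl]
        · refine Finset.sum_congr rfl fun j hj => ?_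
          have hji : j ≠ i := (Finset.mem_erase.mp hj).1
          simp only [hSfam, if_neg hji]
      have hite : ∑ y ∈ (p i).supp, (if y = x then 0 else g x y)
          = ∑ y ∈ (p i).supp.erase x, g x y := by
        rw [← Finset.sum_erase (p i).supp (by simp : (if x = x then (0:ℝ) else g x x) = 0)]
        refine Finset.sum_congr rfl fun y hy => ?_
        simp [(Finset.mem_erase.mp hy).1]
      rw [hite]
      calc (∑ j ∈ Finset.univ.erase i, ∑ y ∈ (p j).supp, g x y) +
            ∑ y ∈ (p i).supp.erase x, g x y
          = ∑ j : Fin n, ∑ y ∈ Sfam j, g x y := by rw [hsplit]; ring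
        _ = ∑ y ∈ Finset.univ.biUnion Sfam, g x y := hsum.symm
        _ ≤ 2 * J := hbound
    -- combinatorial core
    have hkey : 2 * (∑ pr ∈ Finset.univ.filter (fun pr : Fin n × Fin n => pr.1 < pr.2),
          D pr.1 pr.2) + ∑ i, E i ≤ 2 * J * ∑ i, ((p i).supp.card : ℝ) := by
      have hswap : ∑ pr ∈ Finset.univ.filter (fun pr : Fin n × Fin n => pr.1 < pr.2),
            D pr.1 pr.2
          = ∑ pr ∈ Finset.univ.filter (fun pr : Fin n × Fin n => pr.2 < pr.1),
            D pr.1 pr.2 := by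
        refine Finset.sum_bij' (fun pr _ => Prod.swap pr) (fun pr _ => Prod.swap pr)
          ?_ ?_ ?_ ?_ ?_
        · intro pr hpr
          simp only [Finset.mem_filter, Finset.mem_univ, true_and] at hpr ⊢
          exact hpr
        · intro pr hpr
          simp only [Finset.mem_filter, Finset.mem_univ, true_and] at hpr ⊢
          exact hpr
        · intro pr hpr; rfl
        · intro pr hpr; rfl
        · intro pr hpr; exact hDsym pr.1 pr.2
      have hne : ∑ pr ∈ Finset.univ.filter (fun pr : Fin n × Fin n => pr.1 ≠ pr.2),
            D pr.1 pr.2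
          = (∑ pr ∈ Finset.univ.filter (fun pr : Fin n × Fin n => pr.1 < pr.2),
              D pr.1 pr.2) +
            ∑ pr ∈ Finset.univ.filter (fun pr : Fin n × Fin n => pr.2 < pr.1),
              D pr.1 pr.2 := by
        rw [← Finset.sum_filter_add_sum_filter_not
          (Finset.univ.filter (fun pr : Fin n × Fin n => pr.1 ≠ pr.2))
          (fun pr => pr.1 < pr.2)]
        congr 1
        · congr 1
          ext pr
          simp only [Finset.mem_filter, Finset.mem_univ, true_and]
          exact ⟨fun h => h.2, fun h => ⟨ne_of_lt h, h⟩⟩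
        · congr 1
          ext pr
          simp only [Finset.mem_filter, Finset.mem_univ, true_and]
          constructor
          · rintro ⟨h1, h2⟩; exact lt_of_le_of_ne (le_of_not_gt h2) (Ne.symm h1)
          · intro h; exact ⟨ne_of_gt h, not_lt_of_gt h⟩
      have hne2 : ∑ pr ∈ Finset.univ.filter (fun pr : Fin n × Fin n => pr.1 ≠ pr.2),
            D pr.1 pr.2
          = ∑ i : Fin n, ∑ j ∈ Finset.univ.erase i, D i j := by
        rw [Finset.sum_filter, Fintype.sum_prod_type]
        refine Finset.sum_congr rfl fun i _ => ?_
        rw [← Finset.filter_ne' Finset.univ i, Finset.sum_filter]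
        refine Finset.sum_congr rfl fun j _ => ?_
        by_cases h : j = i
        · simp [h]
        · have h' : i ≠ j := fun hh => h hh.symm
          simp [h, h']
      have h2 : 2 * (∑ pr ∈ Finset.univ.filter (fun pr : Fin n × Fin n => pr.1 < pr.2),
            D pr.1 pr.2) + ∑ i, E i
          = ∑ i : Fin n, ((∑ j ∈ Finset.univ.erase i, D i j) + E i) := by
        rw [Finset.sum_add_distrib, ← hne2, hne, ← hswap]; ring
      rw [h2]
      have h3 : 2 * J * ∑ i, ((p i).supp.card : ℝ)
          = ∑ i : Fin n, ∑ _x ∈ (p i).supp, (2 * J) := by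
        rw [Finset.mul_sum]
        refine Finset.sum_congr rfl fun i _ => ?_
        rw [Finset.sum_const, nsmul_eq_mul, mul_comm]
      rw [h3]
      refine Finset.sum_le_sum fun i _ => ?_
      have hcomm : ∑ j ∈ Finset.univ.erase i, D i j
          = ∑ x ∈ (p i).supp, ∑ j ∈ Finset.univ.erase i, ∑ y ∈ (p j).supp, g x y :=
        Finset.sum_comm
      rw [hcomm, hE, ← Finset.sum_add_distrib]
      refine Finset.sum_le_sum fun x hx => ?_
      exact hsite i x hx
    -- reduce EReal inequality to real one
    have hWr : ∀ pr ∈ Finset.univ.filter (fun pr : Fin n × Fin n => pr.1 < pr.2),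
        Wpair β Jm Km (p pr.1) (p pr.2) = ((-β * S pr.1 pr.2 : ℝ) : EReal) := by
      intro pr hpr
      rw [Wpair, if_neg (hfar pr (Finset.mem_filter.mp hpr).2)]
    rw [Finset.sum_congr rfl hWr, ← ereal_coe_sum, ← ereal_coe_sum, ← EReal.coe_neg,
      EReal.coe_le_coe_iff]
    -- the real inequality
    have hWD : ∑ pr ∈ Finset.univ.filter (fun pr : Fin n × Fin n => pr.1 < pr.2),
        (-β * D pr.1 pr.2) ≤
        ∑ pr ∈ Finset.univ.filter (fun pr : Fin n × Fin n => pr.1 < pr.2),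
        (-β * S pr.1 pr.2) := by
      refine Finset.sum_le_sum fun pr _ => ?_
      have := hSD pr.1 pr.2
      nlinarith
    have hA : ∑ i, Apoly β Jm Km (p i) ≤ (β / 2) * ∑ i, E i := by
      rw [Finset.mul_sum]
      exact Finset.sum_le_sum fun i _ => hAE i
    have hDsum : ∑ pr ∈ Finset.univ.filter (fun pr : Fin n × Fin n => pr.1 < pr.2),
        (-β * D pr.1 pr.2) = -β * ∑ pr ∈ Finset.univ.filter
          (fun pr : Fin n × Fin n => pr.1 < pr.2), D pr.1 pr.2 := by
      rw [Finset.mul_sum]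
    have hsub : ∑ i, (β * J * ((p i).supp.card : ℝ) - Apoly β Jm Km (p i))
        = β * J * (∑ i, ((p i).supp.card : ℝ)) - ∑ i, Apoly β Jm Km (p i) := by
      rw [Finset.sum_sub_distrib, Finset.mul_sum]
    rw [hsub]
    have hkey' := mul_le_mul_of_nonneg_left hkey (le_of_lt (by linarith : (0:ℝ) < β / 2))
    nlinarith [hWD, hA, hDsum, hkey']
  · -- close case: some pair contributes ⊤
    push_neg at hfar
    obtain ⟨pr, hlt, hcl⟩ := hfar
    have htop : Wpair β Jm Km (p pr.1) (p pr.2) = ⊤ := if_pos hcl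
    have hmem : pr ∈ Finset.univ.filter (fun pr : Fin n × Fin n => pr.1 < pr.2) := by
      simp [hlt]
    have hsum : ∑ pr ∈ Finset.univ.filter (fun pr : Fin n × Fin n => pr.1 < pr.2),
        Wpair β Jm Km (p pr.1) (p pr.2) = ⊤ := by
      rw [← Finset.add_sum_erase _ _ hmem, htop]
      refine EReal.top_add_of_ne_bot (ereal_sum_ne_bot _ _ fun a _ => ?_)
      rw [Wpair]
      split_ifs
      · exact top_ne_bot
      · exact EReal.coe_ne_bot _
    rw [hsum]
    exact le_top
end
end
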